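/- Exactness at the middle term: the image of the map A : C⁺(G₊₁(v)) → C⁺(G) equals the kernel of the map B : C⁺(G) → C⁺(G−v). -/

import Mathlib

/-!
Common setup: the lattice cohomology complex of a weighted graph
(Némethi; J. Greene, "A surgery triangle for lattice cohomology").

A finite graph `G` with integer weights on vertices and signs on (multi-)edges is
encoded by its symmetric incidence data `M : V → V → ℤ`: for `u ≠ w` the entry
`M u w` is the signed number of edges joining `u` and `w`, and `M u u = m(u)` is
the weight of `u`.  This is exactly the data of the intersection pairing `(·,·)`
on `L(G) = ℤ⟨E_u : u ∈ V⟩`, via `M u w = (E_u, E_w)`.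
-/

noncomputable section

open Function

/-- A graph with integer vertex weights and signed multi-edges, encoded by the
symmetric pairing data `M u w = (E_u, E_w)` on `L(G)`. -/
structure WGraph (V : Type*) where
  M : V → V → ℤ
  symm : ∀ u w, M u w = M w u

variable {V : Type*} [Fintype V] [DecidableEq V]

/-- Evaluation of `K ∈ Hom(L(G), ℤ)` (recorded by its components `K u = K(E_u)`)
on a lattice vector `x = ∑ x_u E_u ∈ L(G)`. -/
def evalK (K x : V → ℤ) : ℤ := ∑ u, K u * x u

/-- `E_T = ∑_{j ∈ T} E_j ∈ L(G)`. -/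
def eVec (T : Finset V) : V → ℤ := fun u => if u ∈ T then 1 else 0

/-- Splitting a sum over `V` at a vertex `v`. -/
theorem sum_split (v : V) (f : V → ℤ) :
    ∑ u, f u = f v + ∑ u : {u : V // u ≠ v}, f u.1 := by
  rw [Fintype.sum_eq_add_sum_compl v f]
  congr 1
  exact Finset.sum_subtype _ (fun x => by simp) f

namespace WGraph

/-- The symmetric bilinear pairing `(x, y)` on `L(G)`. -/
def pair (G : WGraph V) (x y : V → ℤ) : ℤ := ∑ u, ∑ w, G.M u w * x u * y w

/-- `K ∈ Hom(L(G),ℤ)` is characteristic: `(K,x) ≡ (x,x) (mod 2)` for all `x ∈ L(G)`. -/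
def IsChar (G : WGraph V) (K : V → ℤ) : Prop :=
  ∀ x : V → ℤ, evalK K x ≡ G.pair x x [ZMOD 2]

/-- The set `Char(G)` of characteristic vectors, as a type. -/
def Ch (G : WGraph V) : Type _ := {K : V → ℤ // G.IsChar K}

/-- `K + 2x ∈ Hom(L(G),ℤ)`, for `K ∈ Hom(L(G),ℤ)` and `x ∈ L(G)` (a lattice vector
is viewed in `Hom(L(G),ℤ)` via the pairing). -/
def chAdd (G : WGraph V) (K x : V → ℤ) : V → ℤ := fun u => K u + 2 * G.pair x (eVec {u})

/-- The difference `q(K + 2x) − q(K) = −((K,x) + (x,x))/2`, where `q(y) = −(y,y)/8`;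
it is an integer whenever `K` is characteristic. -/
def qdiff (G : WGraph V) (K x : V → ℤ) : ℤ := (-(evalK K x + G.pair x x)) / 2

/-- The difference `q(K,S) − q(K) = max { q(K + 2E_T) − q(K) : T ⊆ S }`, where
`q(K,S) = max { q(K + 2 ∑_{j∈T} E_j) : T ⊆ S }`. -/
def qrel (G : WGraph V) (K : V → ℤ) (S : Finset V) : ℤ :=
  S.powerset.sup' (Finset.powerset_nonempty S) fun T => G.qdiff K (eVec T)

/-- `G₊₁(v)`: increase the weight `m(v)` of the vertex `v` by one. -/
def bump (G : WGraph V) (v : V) : WGraph V where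
  M u w := if u = v ∧ w = v then G.M u w + 1 else G.M u w
  symm u w := by
    have h := G.symm u w
    by_cases hu : u = v <;> by_cases hw : w = v <;> simp [hu, hw, h] <;>
      exact G.symm _ _

/-- `G − v`: delete the vertex `v` and all incident edges. -/
def delete (G : WGraph V) (v : V) : WGraph {u : V // u ≠ v} where
  M u w := G.M u.1 w.1
  symm u w := G.symm u.1 w.1

theorem evalK_update (L y : V → ℤ) (v : V) (c : ℤ) :
    evalK (Function.update L v (L v + c)) y = evalK L y + c * y v := by
  unfold evalK
  have h : ∀ u, Function.update L v (L v + c) u * y u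
      = L u * y u + (if u = v then c * y u else 0) := by
    intro u
    rcases eq_or_ne u v with hu | hu <;> simp [hu, Function.update] <;> ring
  simp only [h]
  rw [Finset.sum_add_distrib, Finset.sum_ite_eq' Finset.univ v (fun u => c * y u)]
  simp

theorem IsChar.chAdd {G : WGraph V} {K : V → ℤ} (h : G.IsChar K) (x : V → ℤ) :
    G.IsChar (G.chAdd K x) := by
  intro y
  have key : evalK (G.chAdd K x) y
      = evalK K y + 2 * ∑ u, G.pair x (eVec {u}) * y u := by
    simp only [evalK, WGraph.chAdd, add_mul, mul_assoc]
    rw [Finset.sum_add_distrib, ← Finset.mul_sum]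
  have hy := h y
  simp only [Int.ModEq] at hy ⊢
  rw [key]
  omega

theorem pair_bump (G : WGraph V) (v : V) (y : V → ℤ) :
    (G.bump v).pair y y = G.pair y y + y v * y v := by
  unfold pair bump
  have hu : ∀ u w : V, ((if u = v ∧ w = v then G.M u w + 1 else G.M u w) * y u * y w)
      = G.M u w * y u * y w + (if u = v ∧ w = v then y u * y w else 0) := by
    intro u w
    rcases eq_or_ne u v with h | h <;> rcases eq_or_ne w v with h' | h' <;>
      simp [h, h'] <;> ring
  simp only [hu, Finset.sum_add_distrib]
  congr 1
  have hin : ∀ u : V, (∑ w, if u = v ∧ w = v then y u * y w else 0)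
      = if u = v then y u * y v else 0 := by
    intro u
    rcases eq_or_ne u v with h | h
    · simp [h, Finset.sum_ite_eq' Finset.univ v (fun w => y v * y w)]
    · simp [h]
  rw [Finset.sum_congr rfl (fun u _ => hin u),
    Finset.sum_ite_eq' Finset.univ v (fun u => y u * y v)]
  simp

theorem IsChar.bumpUpdate {G : WGraph V} {L : V → ℤ} (h : G.IsChar L) (v : V) (i : ℤ) :
    (G.bump v).IsChar (Function.update L v (L v + (2 * i + 1))) := by
  intro y
  have h1 := evalK_update L y v (2 * i + 1)
  have h2 := pair_bump G v y
  have hy := h y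
  obtain ⟨k, hk⟩ := Int.even_mul_succ_self (y v - 1)
  have hk' : y v * y v - y v = 2 * k := by
    have h5 : (y v - 1) * (y v - 1 + 1) = y v * y v - y v := by ring
    omega
  have h3 : (2 * i + 1) * y v = 2 * (i * y v) + y v := by ring
  simp only [Int.ModEq] at hy ⊢
  rw [h1, h2, h3]
  omega

theorem IsChar.evenUpdate {G : WGraph V} {L : V → ℤ} (h : G.IsChar L) (v : V) (k : ℤ) :
    G.IsChar (Function.update L v (L v + 2 * k)) := by
  intro y
  have h1 := evalK_update L y v (2 * k)
  have hy := h y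
  have h3 : 2 * k * y v = 2 * (k * y v) := by ring
  simp only [Int.ModEq] at hy ⊢
  rw [h1, h3]
  omega

end WGraph

/-- Extension of `K ∈ Hom(L(G−v),ℤ)` to `Hom(L(G),ℤ)` by the value `t` at `v`:
the vector denoted `(K, t)`. -/
def extV (v : V) (K : {u : V // u ≠ v} → ℤ) (t : ℤ) : V → ℤ :=
  fun u => if h : u = v then t else K ⟨u, h⟩

namespace WGraph

theorem IsChar.extChar {G : WGraph V} {v : V} {K : {u : V // u ≠ v} → ℤ}
    (h : (G.delete v).IsChar K) {t : ℤ} (ht : t ≡ G.M v v [ZMOD 2]) :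
    G.IsChar (extV v K t) := by
  intro y
  have h1 : evalK (extV v K t) y = t * y v + evalK K (fun u => y u.1) := by
    unfold evalK
    rw [sum_split v (fun u => extV v K t u * y u)]
    congr 1
    · simp [extV]
    · exact Finset.sum_congr rfl fun u _ => by simp [extV, u.2]
  have h2 : G.pair y y = (G.delete v).pair (fun u => y u.1) (fun u => y u.1)
      + G.M v v * (y v * y v)
      + 2 * ∑ u : {u : V // u ≠ v}, G.M v u.1 * y v * y u.1 := by
    have step1 : G.pair y y = (∑ w, G.M v w * y v * y w)
        + ∑ u : {u : V // u ≠ v}, ∑ w, G.M u.1 w * y u.1 * y w :=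
      sum_split v (fun u => ∑ w, G.M u w * y u * y w)
    have step2 : (∑ w, G.M v w * y v * y w)
        = G.M v v * y v * y v + ∑ w : {w : V // w ≠ v}, G.M v w.1 * y v * y w.1 :=
      sum_split v _
    have step3 : ∀ u : {u : V // u ≠ v}, (∑ w, G.M u.1 w * y u.1 * y w)
        = G.M u.1 v * y u.1 * y v + ∑ w : {w : V // w ≠ v}, G.M u.1 w.1 * y u.1 * y w.1 :=
      fun u => sum_split v _
    have step4 : (G.delete v).pair (fun u => y u.1) (fun u => y u.1)
        = ∑ u : {u : V // u ≠ v}, ∑ w : {w : V // w ≠ v}, G.M u.1 w.1 * y u.1 * y w.1 := rfl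
    have hc : (∑ u : {u : V // u ≠ v}, G.M u.1 v * y u.1 * y v)
        = ∑ u : {u : V // u ≠ v}, G.M v u.1 * y v * y u.1 := by
      refine Finset.sum_congr rfl fun u _ => ?_
      rw [G.symm u.1 v]; ring
    rw [step1, step2, Finset.sum_congr rfl (fun u _ => step3 u),
      Finset.sum_add_distrib, hc, step4]
    ring
  have hy := h (fun u => y u.1)
  obtain ⟨k, hk⟩ := Int.even_mul_succ_self (y v - 1)
  have hk' : y v * y v - y v = 2 * k := by
    have h5 : (y v - 1) * (y v - 1 + 1) = y v * y v - y v := by ring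
    omega
  obtain ⟨a, ha⟩ : (2:ℤ) ∣ t - G.M v v := Int.ModEq.dvd ht.symm
  have e1 : t * y v = G.M v v * y v + 2 * (a * y v) := by
    have h6 : t = G.M v v + 2 * a := by omega
    rw [h6]; ring
  have e2 : G.M v v * (y v * y v) = G.M v v * y v + 2 * (G.M v v * k) := by
    have h7 : y v * y v = y v + 2 * k := by omega
    rw [h7]; ring
  simp only [Int.ModEq] at hy ⊢
  rw [h1, h2, e1, e2]
  omega

variable {G : WGraph V}

/-- `K + 2x` as a characteristic vector. -/
def Ch.add (K : G.Ch) (x : V → ℤ) : G.Ch := ⟨G.chAdd K.1 x, K.2.chAdd x⟩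

/-- For `K = (K', t) ∈ Char(G)`, the characteristic vector
`(K', t + 2i + 1) ∈ Char(G₊₁(v))`. -/
def Ch.bumpSh (K : G.Ch) (v : V) (i : ℤ) : (G.bump v).Ch :=
  ⟨Function.update K.1 v (K.1 v + (2 * i + 1)), K.2.bumpUpdate v i⟩

/-- For `K = (K', t) ∈ Char(G)`, the characteristic vector `(K', t + 2k) ∈ Char(G)`. -/
def Ch.evenSh (K : G.Ch) (v : V) (k : ℤ) : G.Ch :=
  ⟨Function.update K.1 v (K.1 v + 2 * k), K.2.evenUpdate v k⟩

/-- For `K ∈ Char(G−v)`, the characteristic vector `(K, m(v) + 2i) ∈ Char(G)`. -/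
def Ch.extend {v : V} (K : (G.delete v).Ch) (i : ℤ) : G.Ch :=
  ⟨extV v K.1 (G.M v v + 2 * i),
    K.2.extChar (by show (G.M v v + 2 * i) % 2 = G.M v v % 2; omega)⟩

end WGraph

/-- `𝒯⁺₀ = 𝔽[U,U⁻¹]/(U·𝔽[U])` over `𝔽 = ℤ/2ℤ`: the coefficient at `d ∈ ℕ` records
the coefficient of `U^{−d}`. -/
def Tplus : Type := ℕ →₀ ZMod 2

instance : AddCommGroup Tplus := inferInstanceAs (AddCommGroup (ℕ →₀ ZMod 2))
instance : Module (ZMod 2) Tplus := inferInstanceAs (Module (ZMod 2) (ℕ →₀ ZMod 2))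

/-- The element `U^{-m}` of `𝒯⁺₀`. -/
def Um (m : ℕ) : Tplus := (Finsupp.single m 1 : ℕ →₀ ZMod 2)

/-- Multiplication by `U^e` on `𝒯⁺₀`: `U^e · U^{−d} = U^{−(d−e)}` (which is `0` if `d < e`). -/
def Upow (e : ℤ) (f : Tplus) : Tplus :=
  (Finsupp.comapDomain (fun d : ℕ => (d : ℤ) + e)
    (Finsupp.embDomain ⟨(Nat.cast : ℕ → ℤ), Nat.cast_injective⟩ (f : ℕ →₀ ZMod 2))
    (fun a _ b _ hab => Nat.cast_injective (add_right_cancel hab)) : ℕ →₀ ZMod 2)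

theorem Upow_zero (e : ℤ) : Upow e 0 = 0 := by
  show (Finsupp.comapDomain _ (Finsupp.embDomain _ (0 : ℕ →₀ ZMod 2)) _ : ℕ →₀ ZMod 2)
    = (0 : ℕ →₀ ZMod 2)
  ext d
  simp

/-- `C⁺(G)`: the `𝔽[U]`-module of finitely supported maps `Char(G) × 𝒫(V) → 𝒯⁺₀`. -/
abbrev Cplus (G : WGraph V) : Type _ := (G.Ch × Finset V) →₀ Tplus

/-- The action of (multiplication by) `U` on `C⁺(G)`. -/
def UC (G : WGraph V) (φ : Cplus G) : Cplus G := Finsupp.mapRange (Upow 1) (Upow_zero 1) φ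

/-- `U^{−m} · (K,S)^∨`: the element of `C⁺(G)` supported at the single pair `(K,S)`
with value `U^{−m}`. -/
def dual {G : WGraph V} (p : G.Ch × Finset V) (m : ℕ) : Cplus G :=
  Finsupp.single p (Um m)

/-- The exponent `q(K,S) − q(K, S−w)`. -/
def dExp₁ (G : WGraph V) (K : V → ℤ) (S : Finset V) (w : V) : ℤ :=
  G.qrel K S - G.qrel K (S.erase w)

/-- The exponent `q(K,S) − q(K + 2E_w, S−w)`. -/
def dExp₂ (G : WGraph V) (K : V → ℤ) (S : Finset V) (w : V) : ℤ :=
  G.qrel K S - (G.qdiff K (eVec {w}) + G.qrel (G.chAdd K (eVec {w})) (S.erase w))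

/-- `δ` is the operator on `C⁺(G)` given by
`δ(φ)(K,S) = ∑_{w∈S} [U^{q(K,S)−q(K,S−w)}·φ(K,S−w) + U^{q(K,S)−q(K+2E_w,S−w)}·φ(K+2E_w,S−w)]`. -/
def IsDelta (G : WGraph V) (δ : Cplus G → Cplus G) : Prop :=
  ∀ (φ : Cplus G) (K : G.Ch) (S : Finset V),
    δ φ (K, S) = ∑ w ∈ S,
      (Upow (dExp₁ G K.1 S w) (φ (K, S.erase w))
        + Upow (dExp₂ G K.1 S w) (φ (K.add (eVec {w}), S.erase w)))

/-- The exponent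
`c(i,(K,t),S) = [q((K,t),S) − q(K,t)] − [q'((K,t+2i+1),S) − q'(K,t+2i+1)] + i(i+1)/2`. -/
def cExp (G : WGraph V) (v : V) (i : ℤ) (K : G.Ch) (S : Finset V) : ℤ :=
  G.qrel K.1 S - (G.bump v).qrel (K.bumpSh v i).1 S + i * (i + 1) / 2

/-- `A` is the map `C⁺(G₊₁(v)) → C⁺(G)` given by
`A(φ)((K,t),S) = ∑_{i∈ℤ} U^{c(i,(K,t),S)} · φ((K,t+2i+1),S)`. -/
def IsA (G : WGraph V) (v : V) (A : Cplus (G.bump v) → Cplus G) : Prop :=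
  ∀ (φ : Cplus (G.bump v)) (K : G.Ch) (S : Finset V),
    A φ (K, S) = ∑ᶠ i : ℤ, Upow (cExp G v i K S) (φ (K.bumpSh v i, S))

/-- A subset `S ⊆ V − v` viewed as a subset of `V`. -/
def liftS (v : V) (S : Finset {u : V // u ≠ v}) : Finset V :=
  S.map ⟨Subtype.val, Subtype.val_injective⟩

/-- `B` is the map `C⁺(G) → C⁺(G−v)` given by
`B(φ)(K,S) = ∑_{i∈ℤ} φ((K, m(v)+2i), S)`. -/
def IsB (G : WGraph V) (v : V) (B : Cplus G → Cplus (G.delete v)) : Prop :=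
  ∀ (φ : Cplus G) (K : (G.delete v).Ch) (S : Finset {u : V // u ≠ v}),
    B φ (K, S) = ∑ᶠ i : ℤ, φ (K.extend i, liftS v S)

/-- `r((K,t),S) = q((K,t),S−v) − q((K,t)+2E_v,S−v)` (for `v ∈ S`). -/
def rVal (G : WGraph V) (v : V) (K : G.Ch) (S : Finset V) : ℤ :=
  G.qrel K.1 (S.erase v)
    - (G.qdiff K.1 (eVec {v}) + G.qrel (G.chAdd K.1 (eVec {v})) (S.erase v))

/-- The lattice cohomology `ℍ⁺`: the homology of the complex `(C⁺, δ)`. -/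
abbrev Hlat {G : WGraph V} (δ : Cplus G →ₗ[ZMod 2] Cplus G) : Type _ :=
  LinearMap.ker δ ⧸ (LinearMap.range δ).comap (LinearMap.ker δ).subtype

/-- `𝒟₁ ⊆ C⁺(G)`: the `𝔽`-submodule generated by the `U^{−m}·((K,t),S)^∨` with `v ∈ S`. -/
def D1 (G : WGraph V) (v : V) : Submodule (ZMod 2) (Cplus G) :=
  Submodule.span (ZMod 2)
    {χ | ∃ (K : G.Ch) (S : Finset V) (m : ℕ), v ∈ S ∧ χ = dual (K, S) m}

/-- `𝒟₂ ⊆ C⁺(G)`: the `𝔽`-submodule generated by the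
`U^{−m}·[((K,t),S)^∨ + ((K,t+2),S)^∨]` with `v ∉ S`. -/
def D2 (G : WGraph V) (v : V) : Submodule (ZMod 2) (Cplus G) :=
  Submodule.span (ZMod 2)
    {χ | ∃ (K : G.Ch) (S : Finset V) (m : ℕ), v ∉ S ∧
      χ = dual (K, S) m + dual (K.evenSh v 1, S) m}



/-! ### Auxiliary lemmas: `Tplus` coefficients -/

section AuxTplus

private lemma zmod2_add_self (a : ZMod 2) : a + a = 0 := by revert a; decide

private lemma zmod2_ne_zero {a : ZMod 2} (h : a ≠ 0) : a = 1 := by revert h; revert a; decide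

/-- The coefficient of `U^{-n}`. -/
def cf (x : Tplus) (n : ℕ) : ZMod 2 := (show ℕ →₀ ZMod 2 from x) n

theorem Tplus_ext {x y : Tplus} (h : ∀ n, cf x n = cf y n) : x = y := Finsupp.ext h

theorem cf_add (x y : Tplus) (n : ℕ) : cf (x + y) n = cf x n + cf y n := rfl

theorem cf_zero (n : ℕ) : cf 0 n = 0 := rfl

theorem Tplus_add_self (x : Tplus) : x + x = 0 :=
  Tplus_ext fun n => by rw [cf_add, zmod2_add_self, cf_zero]

theorem cf_Um (m d : ℕ) : cf (Um m) d = if d = m then 1 else 0 := by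
  unfold cf Um
  rw [Finsupp.single_apply]
  by_cases h : d = m
  · rw [if_pos h, if_pos h.symm]
  · rw [if_neg h, if_neg (fun hm => h hm.symm)]

theorem cf_Upow (e : ℤ) (f : Tplus) (d : ℕ) :
    cf (Upow e f) d = if 0 ≤ (d : ℤ) + e then cf f ((d : ℤ) + e).toNat else 0 := by
  unfold cf Upow
  dsimp only
  revert f; intro (f : ℕ →₀ ZMod 2)
  refine (Finsupp.comapDomain_apply _ _ _ _).trans ?_
  split_ifs with h
  · have h2 : (d : ℤ) + e =
        (⟨(Nat.cast : ℕ → ℤ), Nat.cast_injective⟩ : ℕ ↪ ℤ) (((d : ℤ) + e).toNat) := by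
      simp [Int.toNat_of_nonneg h]
    rw [h2, Finsupp.embDomain_apply_self]
    show (show ℕ →₀ ZMod 2 from f) _ = (show ℕ →₀ ZMod 2 from f) _
    congr 1
  · rw [Finsupp.embDomain_notin_range]
    rintro ⟨n, hn⟩
    simp only [Function.Embedding.coeFn_mk] at hn
    omega

theorem Upow_add' (e : ℤ) (x y : Tplus) : Upow e (x + y) = Upow e x + Upow e y :=
  Tplus_ext fun d => by
    rw [cf_add, cf_Upow, cf_Upow, cf_Upow]
    split_ifs with h
    · rw [cf_add]
    · rw [add_zero]

theorem Upow_zero_exp (f : Tplus) : Upow 0 f = f :=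
  Tplus_ext fun d => by
    rw [cf_Upow]
    simp

theorem Upow_Um_le {e : ℤ} {d : ℕ} (h : e ≤ d) : Upow e (Um d) = Um ((d : ℤ) - e).toNat :=
  Tplus_ext fun n => by
    rw [cf_Upow]
    split_ifs with h1
    · rw [cf_Um, cf_Um]
      by_cases hc : ((n : ℤ) + e).toNat = d
      · rw [if_pos hc, if_pos (by omega)]
      · rw [if_neg hc, if_neg (by omega)]
    · rw [cf_Um, if_neg (by omega)]

theorem Upow_Um_gt {e : ℤ} {d : ℕ} (h : (d : ℤ) < e) : Upow e (Um d) = 0 :=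
  Tplus_ext fun n => by
    rw [cf_Upow, cf_zero]
    split_ifs with h1
    · rw [cf_Um, if_neg (by omega)]
    · rfl

theorem cf_Upow_Um_ne {e : ℤ} {d n : ℕ} (h : cf (Upow e (Um d)) n ≠ 0) :
    (n : ℤ) = (d : ℤ) - e := by
  rw [cf_Upow] at h
  split_ifs at h with h1
  · rw [cf_Um] at h
    split_ifs at h with h2
    · omega
    · exact absurd rfl h
  · exact absurd rfl h

theorem cf_Um_self (d : ℕ) : cf (Um d) d = 1 := by rw [cf_Um, if_pos rfl]

theorem Upow_big_eq_zero {e : ℤ} {x : Tplus} (h : ∀ n, cf x n ≠ 0 → (n : ℤ) < e) :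
    Upow e x = 0 :=
  Tplus_ext fun d => by
    rw [cf_Upow, cf_zero]
    split_ifs with h1
    · by_contra hc
      have h2 := h _ hc
      omega
    · rfl

end AuxTplus

/-! ### Auxiliary lemmas: triangular numbers -/

section AuxTri

/-- The triangular number `i (i+1) / 2`. -/
def Tt (i : ℤ) : ℤ := i * (i + 1) / 2

theorem Tt_two (i : ℤ) : 2 * Tt i = i * (i + 1) := by
  obtain ⟨k, hk⟩ := Int.even_mul_succ_self i
  unfold Tt
  omega

theorem Tt_neg_one : Tt (-1) = 0 := by decide

theorem Tt_zero : Tt 0 = 0 := by decide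

theorem Tt_nonneg (i : ℤ) : 0 ≤ Tt i := by
  have h := Tt_two i
  rcases le_or_gt 0 i with h1 | h1
  · nlinarith
  · nlinarith

theorem Tt_ge (i : ℤ) (h1 : 1 ≤ i) : i ≤ Tt i := by nlinarith [Tt_two i]

theorem Tt_ge_neg (i : ℤ) (h1 : i ≤ -1) : 0 ≤ Tt i + i + 1 := by
  rcases eq_or_lt_of_le h1 with h2 | h2
  · subst h2; decide
  · nlinarith [Tt_two i, mul_nonneg (show (0:ℤ) ≤ -i - 1 by omega) (show (0:ℤ) ≤ -i - 2 by omega)]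

theorem Tt_ge_neg' (i : ℤ) (h1 : i ≤ -3) : -i - 2 ≤ Tt i + i + 1 := by
  nlinarith [Tt_two i, mul_nonneg (show (0:ℤ) ≤ -i - 2 by omega) (show (0:ℤ) ≤ -i - 3 by omega)]

theorem Tt_pos_neg (i : ℤ) (h1 : i ≤ -2) : 1 ≤ Tt i := by
  nlinarith [Tt_two i, mul_nonneg (show (0:ℤ) ≤ -i - 2 by omega) (show (0:ℤ) ≤ -i - 1 by omega)]

theorem Tt_reflect (i : ℤ) : Tt (-1 - i) = Tt i := by
  unfold Tt
  congr 1
  ring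

theorem Tt_eq_zero_iff (i : ℤ) : Tt i = 0 ↔ i = 0 ∨ i = -1 := by
  constructor
  · intro h
    by_contra hc
    push_neg at hc
    rcases (by omega : 1 ≤ i ∨ i ≤ -2) with h1 | h1
    · have := Tt_ge i h1; omega
    · have := Tt_pos_neg i h1; omega
  · rintro (rfl | rfl)
    · exact Tt_zero
    · exact Tt_neg_one

end AuxTri



/-! ### Auxiliary lemmas: the bilinear form and `qdiff`/`qrel` -/

section AuxLattice

variable {G : WGraph V} {v : V}

theorem eVec_mem {T : Finset V} {u : V} (h : u ∈ T) : eVec T u = 1 := by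
  unfold eVec; rw [if_pos h]

theorem eVec_not_mem {T : Finset V} {u : V} (h : u ∉ T) : eVec T u = 0 := by
  unfold eVec; rw [if_neg h]

theorem eVec_insert {T : Finset V} (hT : v ∉ T) :
    eVec (insert v T) = eVec {v} + eVec T := by
  funext u
  unfold eVec
  simp only [Pi.add_apply, Finset.mem_insert, Finset.mem_singleton]
  by_cases h1 : u = v
  · subst h1
    simp [hT]
  · by_cases h2 : u ∈ T <;> simp [h1, h2]

theorem pair_add_right' (G : WGraph V) (x y z : V → ℤ) :
    G.pair x (y + z) = G.pair x y + G.pair x z := by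
  unfold WGraph.pair
  rw [← Finset.sum_add_distrib]
  refine Finset.sum_congr rfl fun u _ => ?_
  rw [← Finset.sum_add_distrib]
  exact Finset.sum_congr rfl fun w _ => by simp only [Pi.add_apply]; ring

theorem pair_comm' (G : WGraph V) (x y : V → ℤ) : G.pair x y = G.pair y x := by
  unfold WGraph.pair
  rw [Finset.sum_comm]
  refine Finset.sum_congr rfl fun u _ => Finset.sum_congr rfl fun w _ => ?_
  rw [G.symm w u]
  ring

theorem pair_add_left' (G : WGraph V) (x y z : V → ℤ) :
    G.pair (x + y) z = G.pair x z + G.pair y z := by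
  rw [pair_comm' G (x + y) z, pair_add_right', pair_comm' G z x, pair_comm' G z y]

theorem pair_single_right (G : WGraph V) (x : V → ℤ) (u : V) :
    G.pair x (eVec {u}) = ∑ a, G.M a u * x a := by
  unfold WGraph.pair
  refine Finset.sum_congr rfl fun a _ => ?_
  have h : ∀ w, G.M a w * x a * eVec {u} w = if w = u then G.M a w * x a else 0 := by
    intro w
    unfold eVec
    by_cases h : w = u <;> simp [h]
  rw [Finset.sum_congr rfl fun w _ => h w,
    Finset.sum_ite_eq' Finset.univ u (fun w => G.M a w * x a)]
  simp

theorem sum_pair_single (G : WGraph V) (x y : V → ℤ) :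
    ∑ u, G.pair x (eVec {u}) * y u = G.pair x y := by
  simp only [pair_single_right, Finset.sum_mul]
  rw [Finset.sum_comm]
  unfold WGraph.pair
  exact Finset.sum_congr rfl fun u _ => Finset.sum_congr rfl fun w _ => by ring

theorem evalK_add_right (K x y : V → ℤ) : evalK K (x + y) = evalK K x + evalK K y := by
  unfold evalK
  rw [← Finset.sum_add_distrib]
  exact Finset.sum_congr rfl fun u _ => by simp only [Pi.add_apply]; ring

theorem evalK_chAdd (G : WGraph V) (K x y : V → ℤ) :
    evalK (G.chAdd K x) y = evalK K y + 2 * G.pair x y := by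
  unfold evalK WGraph.chAdd
  rw [← sum_pair_single G x y, Finset.mul_sum, ← Finset.sum_add_distrib]
  exact Finset.sum_congr rfl fun u _ => by ring

theorem evalK_eVec_single (K : V → ℤ) (u : V) : evalK K (eVec {u}) = K u := by
  unfold evalK
  have h : ∀ w, K w * eVec {u} w = if w = u then K w else 0 := by
    intro w
    unfold eVec
    by_cases h : w = u <;> simp [h]
  rw [Finset.sum_congr rfl fun w _ => h w, Finset.sum_ite_eq' Finset.univ u (fun w => K w)]
  simp

theorem pair_bump' (G : WGraph V) (v : V) (x y : V → ℤ) :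
    (G.bump v).pair x y = G.pair x y + x v * y v := by
  unfold WGraph.pair WGraph.bump
  have hu : ∀ u w : V, ((if u = v ∧ w = v then G.M u w + 1 else G.M u w) * x u * y w)
      = G.M u w * x u * y w + (if u = v ∧ w = v then x u * y w else 0) := by
    intro u w
    rcases eq_or_ne u v with h | h <;> rcases eq_or_ne w v with h' | h' <;>
      simp [h, h'] <;> ring
  simp only [hu, Finset.sum_add_distrib]
  congr 1
  have hin : ∀ u : V, (∑ w, if u = v ∧ w = v then x u * y w else 0)
      = if u = v then x u * y v else 0 := by
    intro u
    rcases eq_or_ne u v with h | h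
    · simp [h, Finset.sum_ite_eq' Finset.univ v (fun w => x v * y w)]
    · simp [h]
  rw [Finset.sum_congr rfl fun u _ => hin u,
    Finset.sum_ite_eq' Finset.univ v (fun u => x u * y v)]
  simp

theorem char_even {K : V → ℤ} (hK : G.IsChar K) (x : V → ℤ) :
    ∃ a, evalK K x + G.pair x x = 2 * a := by
  obtain ⟨a, ha⟩ := (hK x).dvd
  exact ⟨evalK K x + a, by omega⟩

theorem qdiff_two {K : V → ℤ} (hK : G.IsChar K) (x : V → ℤ) :
    2 * G.qdiff K x = -(evalK K x + G.pair x x) := by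
  obtain ⟨a, ha⟩ := char_even hK x
  unfold WGraph.qdiff
  omega

/-- Values of `evenSh`. -/
theorem evenSh_val (K : G.Ch) (v : V) (j : ℤ) (u : V) :
    (K.evenSh v j).1 u = if u = v then K.1 v + 2 * j else K.1 u :=
  Function.update_apply _ _ _ _

/-- Values of `bumpSh`. -/
theorem bumpSh_val (K : G.Ch) (v : V) (i : ℤ) (u : V) :
    (K.bumpSh v i).1 u = if u = v then K.1 v + (2 * i + 1) else K.1 u :=
  Function.update_apply _ _ _ _

theorem evenSh_zero (K : G.Ch) (v : V) : K.evenSh v 0 = K := by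
  refine Subtype.ext (funext fun u => ?_)
  rw [evenSh_val]
  split_ifs with h
  · subst h; ring
  · rfl

theorem evenSh_evenSh (K : G.Ch) (v : V) (j j' : ℤ) :
    (K.evenSh v j).evenSh v j' = K.evenSh v (j + j') := by
  refine Subtype.ext (funext fun u => ?_)
  rcases eq_or_ne u v with h | h <;> simp [evenSh_val, h] <;> ring

theorem evenSh_inj {K : G.Ch} {j j' : ℤ} (h : K.evenSh v j = K.evenSh v j') : j = j' := by
  have h2 : (K.evenSh v j).1 v = (K.evenSh v j').1 v := by rw [h]
  rw [evenSh_val, evenSh_val, if_pos rfl, if_pos rfl] at h2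
  omega

theorem evenSh_bumpSh (K : G.Ch) (v : V) (j i : ℤ) :
    (K.evenSh v j).bumpSh v i = K.bumpSh v (i + j) := by
  refine Subtype.ext (funext fun u => ?_)
  rcases eq_or_ne u v with h | h <;> simp [bumpSh_val, evenSh_val, h] <;> ring

theorem bumpSh_inj {K : G.Ch} {i i' : ℤ} (h : K.bumpSh v i = K.bumpSh v i') : i = i' := by
  have h2 : (K.bumpSh v i).1 v = (K.bumpSh v i').1 v := by rw [h]
  rw [bumpSh_val, bumpSh_val, if_pos rfl, if_pos rfl] at h2
  omega

theorem bumpSh_eq_evenSh {K K' : G.Ch} {i i' : ℤ}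
    (h : K'.bumpSh v i' = K.bumpSh v i) : K' = K.evenSh v (i - i') := by
  refine Subtype.ext (funext fun u => ?_)
  have h2 : (K'.bumpSh v i').1 u = (K.bumpSh v i).1 u := by rw [h]
  rw [bumpSh_val, bumpSh_val] at h2
  rw [evenSh_val]
  rcases eq_or_ne u v with hu | hu
  · subst hu
    rw [if_pos rfl] at h2 ⊢
    rw [if_pos rfl] at h2
    omega
  · rw [if_neg hu] at h2 ⊢
    rw [if_neg hu] at h2
    exact h2

/-- The main `qdiff` shift computation for `bumpSh`. -/
theorem qdiff_bump_bumpSh (K : G.Ch) (i : ℤ) (T : Finset V) :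
    (G.bump v).qdiff (K.bumpSh v i).1 (eVec T)
      = G.qdiff K.1 (eVec T) - (i + 1) * (if v ∈ T then 1 else 0) := by
  have h1 := qdiff_two (K.bumpSh v i).2 (eVec T)
  have h2 := qdiff_two K.2 (eVec T)
  have h3 : evalK (K.bumpSh v i).1 (eVec T) = evalK K.1 (eVec T) + (2 * i + 1) * eVec T v :=
    WGraph.evalK_update K.1 (eVec T) v (2 * i + 1)
  have h4 := G.pair_bump v (eVec T)
  by_cases hv : v ∈ T
  · rw [eVec_mem hv] at h3 h4
    rw [if_pos hv]
    omega
  · rw [eVec_not_mem hv] at h3 h4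
    rw [if_neg hv]
    omega

/-- The `qdiff` shift computation for `evenSh`. -/
theorem qdiff_evenSh (K : G.Ch) (k : ℤ) (T : Finset V) :
    G.qdiff (K.evenSh v k).1 (eVec T)
      = G.qdiff K.1 (eVec T) - k * (if v ∈ T then 1 else 0) := by
  have h1 := qdiff_two (K.evenSh v k).2 (eVec T)
  have h2 := qdiff_two K.2 (eVec T)
  have h3 : evalK (K.evenSh v k).1 (eVec T) = evalK K.1 (eVec T) + (2 * k) * eVec T v :=
    WGraph.evalK_update K.1 (eVec T) v (2 * k)
  by_cases hv : v ∈ T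
  · rw [eVec_mem hv] at h3
    rw [if_pos hv]
    omega
  · rw [eVec_not_mem hv] at h3
    rw [if_neg hv]
    omega

/-- `qdiff` only depends on the vector away from `v` when `v ∉ T` (same graph). -/
theorem qdiff_offv {L L' : V → ℤ} (hLL : ∀ u, u ≠ v → L u = L' u) {T : Finset V}
    (hT : v ∉ T) : G.qdiff L (eVec T) = G.qdiff L' (eVec T) := by
  unfold WGraph.qdiff
  have h1 : evalK L (eVec T) = evalK L' (eVec T) := by
    unfold evalK
    refine Finset.sum_congr rfl fun u _ => ?_
    rcases eq_or_ne u v with hu | hu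
    · subst hu
      rw [eVec_not_mem hT]
      ring
    · rw [hLL u hu]
  rw [h1]

/-- `qdiff` in the bumped graph agrees with `qdiff` in `G` for `v ∉ T`. -/
theorem qdiff_bump_offv {L L' : V → ℤ} (hLL : ∀ u, u ≠ v → L u = L' u) {T : Finset V}
    (hT : v ∉ T) : (G.bump v).qdiff L (eVec T) = G.qdiff L' (eVec T) := by
  unfold WGraph.qdiff
  have h1 : evalK L (eVec T) = evalK L' (eVec T) := by
    unfold evalK
    refine Finset.sum_congr rfl fun u _ => ?_
    rcases eq_or_ne u v with hu | hu
    · subst hu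
      rw [eVec_not_mem hT]
      ring
    · rw [hLL u hu]
  have h2 : (G.bump v).pair (eVec T) (eVec T) = G.pair (eVec T) (eVec T) := by
    rw [pair_bump', eVec_not_mem hT]
    ring
  rw [h1, h2]

/-- Additivity of `qdiff` when inserting `v`. -/
theorem qdiff_insert {K : V → ℤ} (hK : G.IsChar K) {T : Finset V} (hT : v ∉ T) :
    G.qdiff K (eVec (insert v T))
      = G.qdiff K (eVec {v}) + G.qdiff (G.chAdd K (eVec {v})) (eVec T) := by
  have h1 := qdiff_two hK (eVec (insert v T))
  have hnum : evalK K (eVec (insert v T)) + G.pair (eVec (insert v T)) (eVec (insert v T))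
      = (evalK K (eVec {v}) + G.pair (eVec {v}) (eVec {v}))
        + (evalK K (eVec T) + G.pair (eVec T) (eVec T)) + 2 * G.pair (eVec {v}) (eVec T) := by
    rw [eVec_insert hT, evalK_add_right, pair_add_right', pair_add_left', pair_add_left']
    have h4 := pair_comm' G (eVec T) (eVec {v})
    omega
  rw [hnum] at h1
  have h2 := qdiff_two hK (eVec {v})
  have h3 := qdiff_two (hK.chAdd (eVec {v})) (eVec T)
  rw [evalK_chAdd] at h3
  omega

end AuxLattice



/-! ### Auxiliary lemmas: `qrel` and `cExp` -/

section AuxQrel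

variable {G : WGraph V} {v : V}

theorem qrel_congr_add {G' : WGraph V} {K K' : V → ℤ} {S : Finset V} {c : ℤ}
    (h : ∀ T ⊆ S, G'.qdiff K' (eVec T) = G.qdiff K (eVec T) + c) :
    G'.qrel K' S = G.qrel K S + c := by
  unfold WGraph.qrel
  have hcomp := Finset.comp_sup'_eq_sup'_comp (s := S.powerset) (Finset.powerset_nonempty S)
    (f := fun T => G.qdiff K (eVec T)) (fun z => z + c)
    (fun x y => by exact (max_add_add_right x y c).symm)
  refine Eq.trans ?_ hcomp.symm
  exact Finset.sup'_congr _ rfl fun T hT => h T (Finset.mem_powerset.mp hT)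

theorem qrel_congr {G' : WGraph V} {K K' : V → ℤ} {S : Finset V}
    (h : ∀ T ⊆ S, G'.qdiff K' (eVec T) = G.qdiff K (eVec T)) :
    G'.qrel K' S = G.qrel K S := by
  have h2 := qrel_congr_add (G := G) (G' := G') (K := K) (K' := K') (S := S) (c := 0)
    (fun T hT => by rw [h T hT]; ring)
  omega

/-- Splitting `qrel` at a vertex `v ∈ S`. -/
theorem qrel_split {K : V → ℤ} (hK : G.IsChar K) {S : Finset V} (hv : v ∈ S) :
    G.qrel K S = max (G.qrel K (S.erase v))
      (G.qdiff K (eVec {v}) + G.qrel (G.chAdd K (eVec {v})) (S.erase v)) := by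
  conv_lhs => rw [show S = insert v (S.erase v) from (Finset.insert_erase hv).symm]
  unfold WGraph.qrel
  rw [Finset.sup'_congr (Finset.powerset_nonempty (insert v (S.erase v)))
    (Finset.powerset_insert (S.erase v) v) (fun T _ => rfl)]
  rw [Finset.sup'_union (Finset.powerset_nonempty _)
    ((Finset.powerset_nonempty _).image _) _]
  congr 1
  rw [Finset.sup'_image]
  have hcomp := Finset.comp_sup'_eq_sup'_comp (s := (S.erase v).powerset)
    (Finset.powerset_nonempty _)
    (f := fun T => G.qdiff (G.chAdd K (eVec {v})) (eVec T))
    (fun z => G.qdiff K (eVec {v}) + z)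
    (fun x y => by omega)
  refine Eq.trans ?_ hcomp.symm
  refine Finset.sup'_congr _ rfl fun T hT => ?_
  have hT2 : v ∉ T := fun hvT =>
    (Finset.notMem_erase v S) (Finset.mem_powerset.mp hT hvT)
  exact qdiff_insert hK hT2

/-- `qrel` of a `bumpSh` for `v ∉ S` agrees with that of `K`. -/
theorem qrel_bump_of_not_mem (K : G.Ch) (i : ℤ) {S : Finset V} (hv : v ∉ S) :
    (G.bump v).qrel (K.bumpSh v i).1 S = G.qrel K.1 S :=
  qrel_congr fun T hT => by
    rw [qdiff_bump_bumpSh, if_neg (fun h => hv (hT h))]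
    ring

theorem cExp_eq (G : WGraph V) (v : V) (i : ℤ) (K : G.Ch) (S : Finset V) :
    cExp G v i K S = G.qrel K.1 S - (G.bump v).qrel (K.bumpSh v i).1 S + Tt i := rfl

theorem cExp_of_not_mem (i : ℤ) (K : G.Ch) {S : Finset V} (hv : v ∉ S) :
    cExp G v i K S = Tt i := by
  rw [cExp_eq, qrel_bump_of_not_mem K i hv]
  ring

theorem cExp_neg_one (K : G.Ch) (S : Finset V) : cExp G v (-1) K S = 0 := by
  have h : (G.bump v).qrel (K.bumpSh v (-1)).1 S = G.qrel K.1 S :=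
    qrel_congr fun T _ => by rw [qdiff_bump_bumpSh]; ring
  rw [cExp_eq, h, Tt_neg_one]
  ring

/-- `a(K,S) = q(K, S-v) - q(K)`. -/
def aVal (G : WGraph V) (v : V) (K : G.Ch) (S : Finset V) : ℤ := G.qrel K.1 (S.erase v)

/-- `b(K,S) = q(K+2E_v, S-v) - q(K)`. -/
def bVal (G : WGraph V) (v : V) (K : G.Ch) (S : Finset V) : ℤ :=
  G.qdiff K.1 (eVec {v}) + G.qrel (G.chAdd K.1 (eVec {v})) (S.erase v)

theorem rVal_eq (G : WGraph V) (v : V) (K : G.Ch) (S : Finset V) :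
    rVal G v K S = aVal G v K S - bVal G v K S := by
  unfold rVal aVal bVal
  ring

theorem qrel_eq_max {K : G.Ch} {S : Finset V} (hv : v ∈ S) :
    G.qrel K.1 S = max (aVal G v K S) (bVal G v K S) :=
  qrel_split K.2 hv

theorem chAdd_offv_agrees (K : G.Ch) (i : ℤ) :
    ∀ u, u ≠ v → (G.bump v).chAdd (K.bumpSh v i).1 (eVec {v}) u
      = G.chAdd K.1 (eVec {v}) u := by
  intro u hu
  unfold WGraph.chAdd
  rw [pair_bump', bumpSh_val, if_neg hu, eVec_not_mem (by simp [Ne.symm hu] : v ∉ ({u} : Finset V))]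
  ring

theorem qrel_bump_eq_max (K : G.Ch) (i : ℤ) {S : Finset V} (hv : v ∈ S) :
    (G.bump v).qrel (K.bumpSh v i).1 S
      = max (aVal G v K S) (bVal G v K S - (i + 1)) := by
  rw [qrel_split (K.bumpSh v i).2 hv]
  have h1 : (G.bump v).qrel (K.bumpSh v i).1 (S.erase v) = aVal G v K S :=
    qrel_bump_of_not_mem K i (Finset.notMem_erase v S)
  have h2 : (G.bump v).qdiff (K.bumpSh v i).1 (eVec {v})
      = G.qdiff K.1 (eVec {v}) - (i + 1) := by
    rw [qdiff_bump_bumpSh, if_pos (Finset.mem_singleton_self v)]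
    ring
  have h3 : (G.bump v).qrel ((G.bump v).chAdd (K.bumpSh v i).1 (eVec {v})) (S.erase v)
      = G.qrel (G.chAdd K.1 (eVec {v})) (S.erase v) :=
    qrel_congr fun T hT => qdiff_bump_offv (chAdd_offv_agrees K i)
      (fun h => (Finset.notMem_erase v S) (hT h))
  rw [h1, h2, h3]
  unfold bVal
  congr 1
  ring

theorem cExp_of_mem (i : ℤ) (K : G.Ch) {S : Finset V} (hv : v ∈ S) :
    cExp G v i K S = max (aVal G v K S) (bVal G v K S)
      - max (aVal G v K S) (bVal G v K S - (i + 1)) + Tt i := by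
  rw [cExp_eq, qrel_eq_max hv, qrel_bump_eq_max K i hv]

theorem aVal_evenSh (K : G.Ch) (j : ℤ) (S : Finset V) :
    aVal G v (K.evenSh v j) S = aVal G v K S :=
  qrel_congr fun T hT => qdiff_offv
    (fun u hu => by rw [evenSh_val, if_neg hu])
    (fun h => (Finset.notMem_erase v S) (hT h))

theorem bVal_evenSh (K : G.Ch) (j : ℤ) (S : Finset V) :
    bVal G v (K.evenSh v j) S = bVal G v K S - j := by
  unfold bVal
  have h1 : G.qdiff (K.evenSh v j).1 (eVec {v}) = G.qdiff K.1 (eVec {v}) - j := by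
    rw [qdiff_evenSh, if_pos (Finset.mem_singleton_self v)]
    ring
  have h2 : G.qrel (G.chAdd (K.evenSh v j).1 (eVec {v})) (S.erase v)
      = G.qrel (G.chAdd K.1 (eVec {v})) (S.erase v) := by
    refine qrel_congr fun T hT => qdiff_offv (fun u hu => ?_)
      (fun h => (Finset.notMem_erase v S) (hT h))
    unfold WGraph.chAdd
    rw [evenSh_val, if_neg hu]
  rw [h1, h2]
  ring

theorem rVal_evenSh (K : G.Ch) (j : ℤ) (S : Finset V) :
    rVal G v (K.evenSh v j) S = rVal G v K S + j := by
  rw [rVal_eq, rVal_eq, aVal_evenSh, bVal_evenSh]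
  ring

/-- Nonnegativity of the exponents `c(i,K,S)`. -/
theorem cExp_nonneg (i : ℤ) (K : G.Ch) (S : Finset V) : 0 ≤ cExp G v i K S := by
  by_cases hv : v ∈ S
  · rw [cExp_of_mem i K hv]
    rcases le_or_gt 0 i with h | h
    · have := Tt_nonneg i
      omega
    · have := Tt_ge_neg i (by omega)
      omega
  · rw [cExp_of_not_mem i K hv]
    exact Tt_nonneg i

/-- Bounded exponents force a bounded index. -/
theorem cExp_le_bound {d : ℤ} (hd : 0 ≤ d) {i : ℤ} {K : G.Ch} {S : Finset V}
    (h : cExp G v i K S ≤ d) : -(d + 4) ≤ i ∧ i ≤ d + 4 := by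
  rcases (by omega : (1 ≤ i ∧ i ≤ d + 4) ∨ (-(d+4) ≤ i ∧ i ≤ 0) ∨ 7 ≤ -i + 4 - d ∨ d + 5 ≤ i) with
    h1 | h1 | h1 | h1
  · omega
  · omega
  · -- i very negative : `i ≤ -d - 3 ≤ -3`
    exfalso
    have hTt := Tt_ge_neg' i (by omega)
    by_cases hv : v ∈ S
    · rw [cExp_of_mem i K hv] at h
      omega
    · rw [cExp_of_not_mem i K hv] at h
      omega
  · -- i very positive
    exfalso
    have hTt := Tt_ge i (by omega)
    by_cases hv : v ∈ S
    · rw [cExp_of_mem i K hv] at h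
      omega
    · rw [cExp_of_not_mem i K hv] at h
      omega

/-- Classification of the vanishing of `c(i,K,S)` for `v ∈ S`. -/
theorem cExp_zero_cases {i : ℤ} {K : G.Ch} {S : Finset V} (hv : v ∈ S)
    (h : cExp G v i K S = 0) :
    i = -1 ∨ (i = 0 ∧ 0 ≤ rVal G v K S) ∨ (i = -2 ∧ rVal G v K S ≤ 0) := by
  rw [cExp_of_mem i K hv] at h
  rw [rVal_eq]
  rcases (by omega : i = -1 ∨ i = 0 ∨ i = -2 ∨ 1 ≤ i ∨ i ≤ -3) with h1 | h1 | h1 | h1 | h1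
  · exact Or.inl h1
  · subst h1
    rw [Tt_zero] at h
    right; left
    exact ⟨rfl, by omega⟩
  · subst h1
    rw [show Tt (-2) = 1 from by decide] at h
    right; right
    exact ⟨rfl, by omega⟩
  · exfalso
    have := Tt_ge i h1
    omega
  · exfalso
    have := Tt_ge_neg' i h1
    omega

end AuxQrel



/-! ### Auxiliary lemmas: restriction, extension and columns -/

section AuxColumns

variable {G : WGraph V} {v : V}

theorem extend_val (K : (G.delete v).Ch) (i : ℤ) (u : V) :
    (K.extend i).1 u = if h : u = v then G.M v v + 2 * i else K.1 ⟨u, h⟩ := rfl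

/-- The restriction of a characteristic vector of `G` to `G - v` is characteristic. -/
theorem isChar_restr (K : G.Ch) :
    (G.delete v).IsChar (fun u : {u : V // u ≠ v} => K.1 u.1) := by
  intro x
  set x' : V → ℤ := fun u => if h : u = v then 0 else x ⟨u, h⟩ with hx'
  have hx'v : x' v = 0 := by simp [hx']
  have hsub : ∀ u : {u : V // u ≠ v}, x' u.1 = x u := fun u => by simp [hx', u.2]
  have h1 : evalK (fun u : {u : V // u ≠ v} => K.1 u.1) x = evalK K.1 x' := by
    unfold evalK
    rw [sum_split v (fun u => K.1 u * x' u), hx'v]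
    rw [mul_zero, zero_add]
    exact (Finset.sum_congr rfl fun u _ => by rw [hsub]).symm
  have h2 : (G.delete v).pair x x = G.pair x' x' := by
    unfold WGraph.pair WGraph.delete
    rw [sum_split v (fun u => ∑ w, G.M u w * x' u * x' w)]
    simp only [hx'v, mul_zero, zero_mul, Finset.sum_const_zero, zero_add]
    refine (Finset.sum_congr rfl fun u _ => ?_).symm
    rw [sum_split v (fun w => G.M u.1 w * x' u.1 * x' w), hx'v]
    rw [mul_zero, zero_add]
    exact (Finset.sum_congr rfl fun w _ => by rw [hsub, hsub]).symm
  rw [h1, h2]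
  exact K.2 x'

/-- The restriction of `K ∈ Char(G)` to `G - v`. -/
def chRestr (v : V) (K : G.Ch) : (G.delete v).Ch :=
  ⟨fun u => K.1 u.1, isChar_restr K⟩

theorem char_v_parity (K : G.Ch) : ∃ i : ℤ, K.1 v = G.M v v + 2 * i := by
  have h := (K.2 (eVec {v})).dvd
  rw [evalK_eVec_single] at h
  have h2 : G.pair (eVec {v}) (eVec {v}) = G.M v v := by
    rw [pair_single_right]
    exact evalK_eVec_single (fun a => G.M a v) v
  rw [h2] at h
  obtain ⟨a, ha⟩ := h
  exact ⟨-a, by omega⟩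

theorem chRestr_extend (K : G.Ch) : ∃ i : ℤ, (chRestr v K).extend i = K := by
  obtain ⟨i, hi⟩ := char_v_parity (v := v) K
  refine ⟨i, Subtype.ext (funext fun u => ?_)⟩
  rw [extend_val]
  split_ifs with h
  · subst h; omega
  · rfl

theorem extend_shift (K' : (G.delete v).Ch) (i i₀ : ℤ) :
    K'.extend i = (K'.extend i₀).evenSh v (i - i₀) := by
  refine Subtype.ext (funext fun u => ?_)
  rw [evenSh_val]
  rcases eq_or_ne u v with h | h
  · subst h
    rw [if_pos rfl, extend_val, extend_val, dif_pos rfl, dif_pos rfl]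
    ring
  · rw [if_neg h, extend_val, extend_val, dif_neg h, dif_neg h]

theorem extend_inj {K' : (G.delete v).Ch} {i i' : ℤ}
    (h : K'.extend i = K'.extend i') : i = i' := by
  have h2 : (K'.extend i).1 v = (K'.extend i').1 v := by rw [h]
  rw [extend_val, extend_val, dif_pos rfl, dif_pos rfl] at h2
  omega

theorem not_mem_liftS (S : Finset {u : V // u ≠ v}) : v ∉ liftS v S := by
  unfold liftS
  rw [Finset.mem_map]
  rintro ⟨u, _, hu⟩
  exact u.2 hu

theorem liftS_subtype {S : Finset V} (hv : v ∉ S) :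
    liftS v (S.subtype (· ≠ v)) = S := by
  ext u
  unfold liftS
  simp only [Finset.mem_map, Finset.mem_subtype, Function.Embedding.coeFn_mk]
  constructor
  · rintro ⟨a, ha, rfl⟩
    exact ha
  · intro hu
    exact ⟨⟨u, fun he => hv (he ▸ hu)⟩, hu, rfl⟩

/-- Every characteristic vector of `G₊₁(v)` is `(K,t)` with `t ≡ m(v)+1 (mod 2)`,
i.e. arises as a `bumpSh`. -/
theorem exists_bumpSh (L : (G.bump v).Ch) : ∃ K : G.Ch, K.bumpSh v 0 = L := by
  have hchar : G.IsChar (Function.update L.1 v (L.1 v - 1)) := by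
    intro y
    have h1 : evalK (Function.update L.1 v (L.1 v - 1)) y = evalK L.1 y + (-1) * y v := by
      have := WGraph.evalK_update L.1 y v (-1)
      rw [show L.1 v + (-1) = L.1 v - 1 from by ring] at this
      exact this
    have h2 := pair_bump' G v y y
    have hy := L.2 y
    obtain ⟨k, hk⟩ := Int.even_mul_succ_self (y v - 1)
    have hk' : y v * y v - y v = 2 * k := by
      have h5 : (y v - 1) * (y v - 1 + 1) = y v * y v - y v := by ring
      omega
    have hd := hy.dvd
    obtain ⟨a, ha⟩ := hd
    rw [Int.ModEq]
    omega
  refine ⟨⟨Function.update L.1 v (L.1 v - 1), hchar⟩, Subtype.ext (funext fun u => ?_)⟩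
  erw [bumpSh_val]
  rcases eq_or_ne u v with h | h
  · rw [if_pos h]
    show Function.update L.1 v (L.1 v - 1) v + (2 * 0 + 1) = L.1 u
    rw [h, Function.update_self]
    ring
  · rw [if_neg h]
    show Function.update L.1 v (L.1 v - 1) u = L.1 u
    rw [Function.update_of_ne h]

end AuxColumns



/-! ### Auxiliary lemmas: the operators `A` and `B` -/

section AuxAB

variable {G : WGraph V} {v : V}

theorem A_term_support (ψ : Cplus (G.bump v)) (K : G.Ch) (S : Finset V) :
    (Function.support fun i : ℤ => Upow (cExp G v i K S) (ψ (K.bumpSh v i, S))).Finite := by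
  have hinj : Function.Injective (fun i : ℤ => ((K.bumpSh v i, S) : (G.bump v).Ch × Finset V)) :=
    fun i i' h => bumpSh_inj (congrArg Prod.fst h)
  refine Set.Finite.subset (Set.Finite.preimage hinj.injOn ψ.support.finite_toSet) ?_
  intro i hi
  simp only [Function.mem_support] at hi
  simp only [Set.mem_preimage, Finset.coe_sort_coe, Finset.mem_coe, Finsupp.mem_support_iff]
  intro hz
  exact hi (by rw [hz, Upow_zero])

theorem B_term_support (φ : Cplus G) (K : (G.delete v).Ch) (S : Finset {u : V // u ≠ v}) :
    (Function.support fun i : ℤ => φ (K.extend i, liftS v S)).Finite := by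
  have hinj : Function.Injective (fun i : ℤ => ((K.extend i, liftS v S) : G.Ch × Finset V)) :=
    fun i i' h => extend_inj (congrArg Prod.fst h)
  refine Set.Finite.subset (Set.Finite.preimage hinj.injOn φ.support.finite_toSet) ?_
  intro i hi
  simp only [Function.mem_support] at hi
  simp only [Set.mem_preimage, Finset.coe_sort_coe, Finset.mem_coe, Finsupp.mem_support_iff]
  exact hi

theorem A_add {A : Cplus (G.bump v) → Cplus G} (hA : IsA G v A) (ψ ψ' : Cplus (G.bump v)) :
    A (ψ + ψ') = A ψ + A ψ' := by
  refine Finsupp.ext fun p => ?_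
  obtain ⟨K, S⟩ := p
  rw [Finsupp.add_apply, hA, hA, hA,
    ← finsum_add_distrib (A_term_support ψ K S) (A_term_support ψ' K S)]
  refine finsum_congr fun i => ?_
  rw [Finsupp.add_apply, Upow_add']

theorem A_zero {A : Cplus (G.bump v) → Cplus G} (hA : IsA G v A) : A 0 = 0 := by
  refine Finsupp.ext fun p => ?_
  obtain ⟨K, S⟩ := p
  rw [hA]
  rw [finsum_congr (fun i => by rw [Finsupp.zero_apply, Upow_zero] :
    ∀ i : ℤ, Upow (cExp G v i K S) ((0 : Cplus (G.bump v)) (K.bumpSh v i, S)) = 0)]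
  rw [finsum_zero, Finsupp.zero_apply]

theorem B_add {B : Cplus G → Cplus (G.delete v)} (hB : IsB G v B) (φ φ' : Cplus G) :
    B (φ + φ') = B φ + B φ' := by
  refine Finsupp.ext fun p => ?_
  obtain ⟨K, S⟩ := p
  rw [Finsupp.add_apply, hB, hB, hB,
    ← finsum_add_distrib (B_term_support φ K S) (B_term_support φ' K S)]
  refine finsum_congr fun i => ?_
  rw [Finsupp.add_apply]

theorem A_single_eval {A : Cplus (G.bump v) → Cplus G} (hA : IsA G v A)
    (K : G.Ch) (n j : ℤ) (S : Finset V) (x : Tplus) :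
    A (Finsupp.single (K.bumpSh v n, S) x) (K.evenSh v j, S)
      = Upow (cExp G v (n - j) (K.evenSh v j) S) x := by
  rw [hA]
  rw [finsum_eq_single _ (n - j) ?_]
  · rw [evenSh_bumpSh, show n - j + j = n from by ring, Finsupp.single_eq_same]
  · intro i hi
    rw [evenSh_bumpSh, Finsupp.single_eq_of_ne, Upow_zero]
    intro hc
    have h2 := bumpSh_inj (K := K) (congrArg Prod.fst hc)
    omega

theorem A_single_ne {A : Cplus (G.bump v) → Cplus G} (hA : IsA G v A)
    (K : G.Ch) (n : ℤ) (S : Finset V) (x : Tplus) {p : G.Ch × Finset V}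
    (h : A (Finsupp.single (K.bumpSh v n, S) x) p ≠ 0) :
    p.2 = S ∧ ∃ j : ℤ, p.1 = K.evenSh v j := by
  obtain ⟨K', S'⟩ := p
  rw [hA] at h
  have h2 : ∃ i, Upow (cExp G v i K' S')
      ((Finsupp.single (K.bumpSh v n, S) x) (K'.bumpSh v i, S')) ≠ 0 := by
    by_contra hc
    push_neg at hc
    exact h (by rw [finsum_congr hc, finsum_zero])
  obtain ⟨i, hi⟩ := h2
  have h3 : (Finsupp.single (K.bumpSh v n, S) x) (K'.bumpSh v i, S') ≠ 0 := by
    intro hz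
    rw [hz, Upow_zero] at hi
    exact hi rfl
  have h4 : (K.bumpSh v n, S) = ((K'.bumpSh v i, S') : (G.bump v).Ch × Finset V) := by
    by_contra hc
    rw [Finsupp.single_eq_of_ne' hc] at h3
    exact h3 rfl
  have hS : S' = S := (congrArg Prod.snd h4).symm
  have hK : K'.bumpSh v i = K.bumpSh v n := (congrArg Prod.fst h4).symm
  exact ⟨hS, n - i, bumpSh_eq_evenSh hK⟩

/-- The key cancellation: `∑ᶠ i, U^{T(c₀ - i)} x = 0` in characteristic two. -/
theorem sum_Upow_Tt (x : Tplus) (c₀ : ℤ) : ∑ᶠ i : ℤ, Upow (Tt (c₀ - i)) x = 0 := by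
  by_cases hx : x = 0
  · rw [finsum_congr (fun i => by rw [hx, Upow_zero] :
      ∀ i : ℤ, Upow (Tt (c₀ - i)) x = 0), finsum_zero]
  · set N : ℕ := (show ℕ →₀ ZMod 2 from x).support.sup id with hN
    have hbd : ∀ n, cf x n ≠ 0 → n ≤ N := fun n hn =>
      Finset.le_sup (f := id) (Finsupp.mem_support_iff.mpr hn)
    have hzero : ∀ e : ℤ, (N : ℤ) < e → Upow e x = 0 := fun e he =>
      Upow_big_eq_zero fun n hn => lt_of_le_of_lt (by exact_mod_cast hbd n hn) he
    have hsupp : (Function.support fun i : ℤ => Upow (Tt (c₀ - i)) x)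
        ⊆ (Finset.Icc (c₀ - (N + 1)) (c₀ + (N + 2)) : Finset ℤ) := by
      intro i hi
      simp only [Function.mem_support] at hi
      simp only [Finset.coe_Icc, Set.mem_Icc]
      by_contra hc
      push_neg at hc
      have hTt : (N : ℤ) < Tt (c₀ - i) := by
        rcases (by omega : 1 ≤ c₀ - i ∧ (N:ℤ) + 1 < c₀ - i ∨ c₀ - i ≤ -1 ∧ c₀ - i < -(N:ℤ) - 1) with
          ⟨h1, h2⟩ | ⟨h1, h2⟩
        · have := Tt_ge (c₀ - i) h1
          omega
        · have := Tt_ge_neg (c₀ - i) h1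
          omega
      exact hi (hzero _ hTt)
    rw [finsum_eq_finset_sum_of_support_subset _ hsupp]
    refine Finset.sum_involution (fun i _ => 2 * c₀ + 1 - i) (fun i _ => ?_) (fun i _ _ => ?_)
      (fun i hi => ?_) (fun i hi => ?_)
    · rw [show c₀ - (2 * c₀ + 1 - i) = -1 - (c₀ - i) from by ring, Tt_reflect]
      exact Tplus_add_self _
    · show 2 * c₀ + 1 - i ≠ i
      omega
    · simp only [Finset.mem_Icc] at hi ⊢
      omega
    · show 2 * c₀ + 1 - (2 * c₀ + 1 - i) = i
      omega

/-- `B ∘ A` kills single generators. -/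
theorem B_A_single {A : Cplus (G.bump v) → Cplus G} (hA : IsA G v A)
    {B : Cplus G → Cplus (G.delete v)} (hB : IsB G v B)
    (K : G.Ch) (n : ℤ) (S : Finset V) (x : Tplus) :
    B (A (Finsupp.single (K.bumpSh v n, S) x)) = 0 := by
  refine Finsupp.ext fun p => ?_
  obtain ⟨K'', S''⟩ := p
  rw [hB, Finsupp.zero_apply]
  by_cases hS : liftS v S'' = S
  · by_cases hcol : ∃ i j : ℤ, K''.extend i = K.evenSh v j
    · obtain ⟨i₀, j₀, hij⟩ := hcol
      have hext : ∀ i : ℤ, K''.extend i = K.evenSh v (j₀ + (i - i₀)) := by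
        intro i
        rw [extend_shift K'' i i₀, hij, evenSh_evenSh]
      have hvS : v ∉ S := hS ▸ not_mem_liftS S''
      have hterm : ∀ i : ℤ, A (Finsupp.single (K.bumpSh v n, S) x) (K''.extend i, liftS v S'')
          = Upow (Tt ((n - j₀ + i₀) - i)) x := by
        intro i
        rw [hS, hext i, A_single_eval hA]
        rw [cExp_of_not_mem _ _ hvS]
        congr 2
        ring
      rw [finsum_congr hterm]
      exact sum_Upow_Tt x (n - j₀ + i₀)
    · push_neg at hcol
      have hterm : ∀ i : ℤ, A (Finsupp.single (K.bumpSh v n, S) x) (K''.extend i, liftS v S'')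
          = 0 := by
        intro i
        by_contra hc
        obtain ⟨-, j, hj⟩ := A_single_ne hA K n S x hc
        exact hcol i j hj
      rw [finsum_congr hterm, finsum_zero]
  · have hterm : ∀ i : ℤ, A (Finsupp.single (K.bumpSh v n, S) x) (K''.extend i, liftS v S'')
        = 0 := by
      intro i
      by_contra hc
      obtain ⟨hS2, -⟩ := A_single_ne hA K n S x hc
      exact hS hS2
    rw [finsum_congr hterm, finsum_zero]

/-- `B ∘ A = 0`. -/
theorem B_A_eq_zero {A : Cplus (G.bump v) → Cplus G} (hA : IsA G v A)
    {B : Cplus G → Cplus (G.delete v)} (hB : IsB G v B) (ψ : Cplus (G.bump v)) :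
    B (A ψ) = 0 := by
  induction ψ using Finsupp.induction with
  | zero =>
    rw [A_zero hA]
    refine Finsupp.ext fun p => ?_
    obtain ⟨K, S⟩ := p
    rw [hB, Finsupp.zero_apply]
    rw [finsum_congr (fun i => Finsupp.zero_apply :
      ∀ i : ℤ, (0 : Cplus G) ((K.extend i, liftS v S) : G.Ch × Finset V) = 0), finsum_zero]
  | single_add p b f _ _ ih =>
    obtain ⟨L, S⟩ := p
    obtain ⟨K, hK⟩ := exists_bumpSh L
    rw [A_add hA, B_add hB, ih]
    rw [← hK, B_A_single hA hB]
    rw [add_zero]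

end AuxAB



/-! ### Auxiliary lemmas: atoms and measures -/

section AuxMeasure

attribute [local instance] Classical.propDecidable

variable {G : WGraph V} {v : V}

/-- Coefficient extraction as an additive map. -/
def cfHom (D : ℕ) : Tplus →+ ZMod 2 :=
  ⟨⟨fun t => cf t D, cf_zero D⟩, fun a b => cf_add a b D⟩

theorem cfHom_apply (D : ℕ) (t : Tplus) : cfHom D t = cf t D := rfl

theorem cf_finset_sum {α : Type*} (s : Finset α) (g : α → Tplus) (D : ℕ) :
    cf (∑ n ∈ s, g n) D = ∑ n ∈ s, cf (g n) D :=
  map_sum (cfHom D) g s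

/-- The set of "atoms" (positions of nonzero coefficients) of an element of `C⁺(G)`. -/
def atomSet (φ : Cplus G) : Finset ((G.Ch × Finset V) × ℕ) :=
  φ.support.biUnion fun p => ((show ℕ →₀ ZMod 2 from φ p).support).image fun d => (p, d)

theorem mem_atomSet {φ : Cplus G} {x : (G.Ch × Finset V) × ℕ} :
    x ∈ atomSet φ ↔ cf (φ x.1) x.2 ≠ 0 := by
  obtain ⟨p, d⟩ := x
  unfold atomSet
  simp only [Finset.mem_biUnion, Finset.mem_image, Finsupp.mem_support_iff]
  constructor
  · rintro ⟨q, hq, d', hd', he⟩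
    cases he
    exact Finsupp.mem_support_iff.mp hd'
  · intro h
    refine ⟨p, ?_, d, Finsupp.mem_support_iff.mpr h, rfl⟩
    intro hz
    refine h ?_
    rw [hz]
    exact cf_zero d

theorem Cplus_add_self (φ : Cplus G) : φ + φ = 0 :=
  Finsupp.ext fun p => Tplus_add_self _

theorem eq_zero_of_atomSet_empty {φ : Cplus G} (h : ∀ x, x ∉ atomSet φ) : φ = 0 := by
  refine Finsupp.ext fun p => Tplus_ext fun n => ?_
  have h2 := h ((p, n))
  rw [mem_atomSet] at h2
  push_neg at h2
  have h3 : (0 : Cplus G) p = 0 := rfl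
  rw [h3, cf_zero]
  exact h2

/-- The basic measure-decrease lemma: adding `ξ` kills the atom `x₀` and only creates
atoms in `J`, whose total weight is smaller. -/
theorem atom_sum_lt {w : ((G.Ch × Finset V) × ℕ) → ℕ} {φ ξ : Cplus G}
    {x₀ : (G.Ch × Finset V) × ℕ} {J : Finset ((G.Ch × Finset V) × ℕ)}
    (hx₀φ : cf (φ x₀.1) x₀.2 ≠ 0)
    (hcancel : cf ((φ + ξ) x₀.1) x₀.2 = 0)
    (hξ : ∀ x, cf (ξ x.1) x.2 ≠ 0 → x = x₀ ∨ x ∈ J)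
    (hJ : ∑ x ∈ J, w x < w x₀) :
    ∑ x ∈ atomSet (φ + ξ), w x < ∑ x ∈ atomSet φ, w x := by
  have hsub : atomSet (φ + ξ) ⊆ ((atomSet φ).erase x₀) ∪ J := by
    intro y hy
    rw [mem_atomSet] at hy
    rw [Finset.mem_union, Finset.mem_erase, mem_atomSet]
    have hyne : y ≠ x₀ := by
      intro he
      rw [he] at hy
      exact hy hcancel
    rw [Finsupp.add_apply, cf_add] at hy
    by_cases hξy : cf (ξ y.1) y.2 = 0
    · left
      refine ⟨hyne, ?_⟩
      rwa [hξy, add_zero] at hy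
    · rcases hξ y hξy with he | hm
      · exact absurd he hyne
      · right; exact hm
  have hmem : x₀ ∈ atomSet φ := mem_atomSet.mpr hx₀φ
  have h1 : ∑ x ∈ atomSet (φ + ξ), w x ≤ ∑ x ∈ ((atomSet φ).erase x₀) ∪ J, w x :=
    Finset.sum_le_sum_of_subset hsub
  have h2 : ∑ x ∈ ((atomSet φ).erase x₀) ∪ J, w x
      + ∑ x ∈ ((atomSet φ).erase x₀) ∩ J, w x
      = ∑ x ∈ (atomSet φ).erase x₀, w x + ∑ x ∈ J, w x := Finset.sum_union_inter
  have h3 : ∑ x ∈ (atomSet φ).erase x₀, w x + w x₀ = ∑ x ∈ atomSet φ, w x :=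
    Finset.sum_erase_add _ _ hmem
  omega

end AuxMeasure

/-! ### Auxiliary lemmas: rows and the constraint imposed by `B` -/

section AuxRows

variable {G : WGraph V} {v : V}

theorem B_row_sum {B : Cplus G → Cplus (G.delete v)} (hB : IsB G v B) {φ : Cplus G}
    (hBφ : B φ = 0) (K : G.Ch) {S : Finset V} (hvS : v ∉ S) (D : ℕ) :
    ∑ᶠ i : ℤ, cf (φ (K.evenSh v i, S)) D = 0 := by
  obtain ⟨i₀, hi₀⟩ := chRestr_extend (v := v) K
  have h1 : B φ (chRestr v K, S.subtype (· ≠ v)) = 0 := by rw [hBφ]; rfl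
  rw [hB, liftS_subtype hvS] at h1
  have hfin : (Function.support fun i : ℤ => φ ((chRestr v K).extend i, S)).Finite := by
    have hinj : Function.Injective
        (fun i : ℤ => (((chRestr v K).extend i, S) : G.Ch × Finset V)) :=
      fun i i' h => extend_inj (congrArg Prod.fst h)
    refine Set.Finite.subset (Set.Finite.preimage hinj.injOn φ.support.finite_toSet) ?_
    intro i hi
    simp only [Function.mem_support] at hi
    simpa only [Set.mem_preimage, Finset.coe_sort_coe, Finset.mem_coe,
      Finsupp.mem_support_iff] using hi
  have h2 : (∑ᶠ i : ℤ, cf (φ ((chRestr v K).extend i, S)) D) = 0 := by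
    have h3 := (cfHom D).map_finsum hfin
    rw [h1, map_zero] at h3
    rw [finsum_congr (fun i => (cfHom_apply D _).symm :
      ∀ i : ℤ, cf (φ ((chRestr v K).extend i, S)) D
        = cfHom D (φ ((chRestr v K).extend i, S)))]
    exact h3.symm
  have hext : ∀ i : ℤ, (chRestr v K).extend i = K.evenSh v (i - i₀) := by
    intro i
    rw [extend_shift (chRestr v K) i i₀, hi₀]
  rw [finsum_congr (fun i => by rw [hext i] :
    ∀ i : ℤ, cf (φ ((chRestr v K).extend i, S)) D = cf (φ (K.evenSh v (i - i₀), S)) D)] at h2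
  have hre := finsum_comp_equiv (Equiv.subRight i₀)
    (f := fun j : ℤ => cf (φ (K.evenSh v j, S)) D)
  simp only [Equiv.subRight_apply] at hre
  rw [← hre]
  exact h2

theorem exists_second_atom {B : Cplus G → Cplus (G.delete v)} (hB : IsB G v B)
    {φ : Cplus G} (hBφ : B φ = 0) {K : G.Ch} {S : Finset V} {D : ℕ} (hvS : v ∉ S)
    (hatom : cf (φ (K, S)) D ≠ 0) :
    ∃ j : ℤ, j ≠ 0 ∧ cf (φ (K.evenSh v j, S)) D ≠ 0 := by
  have h := B_row_sum hB hBφ K hvS D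
  by_contra hc
  push_neg at hc
  have h2 : (∑ᶠ i : ℤ, cf (φ (K.evenSh v i, S)) D) = cf (φ (K.evenSh v 0, S)) D :=
    finsum_eq_single _ 0 (fun i hi => hc i hi)
  rw [h2, evenSh_zero] at h
  exact hatom h

end AuxRows



/-! ### Elimination of atoms over subsets containing `v` -/

section AuxStep1

attribute [local instance] Classical.propDecidable

variable {G : WGraph V} {v : V}

/-- Weight of an atom for the first elimination. -/
def wgt1 (v : V) (d₀ : ℕ) : (G.Ch × Finset V) × ℕ → ℕ
  | ((K', S'), m) =>
    if v ∈ S' then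
      (2 * d₀ + 12) ^ ((rVal G v K' S').natAbs + (d₀ + 7) * (m + 1))
    else 0

theorem wgt1_eval (d₀ : ℕ) (K' : G.Ch) (S' : Finset V) (m : ℕ) :
    wgt1 v d₀ ((K', S'), m)
      = if v ∈ S' then
          (2 * d₀ + 12) ^ ((rVal G v K' S').natAbs + (d₀ + 7) * (m + 1))
        else 0 := rfl

/-- The measure for the first elimination. -/
def mu1 (v : V) (d₀ : ℕ) (φ : Cplus G) : ℕ := ∑ x ∈ atomSet φ, wgt1 v d₀ x

theorem mu1_def (d₀ : ℕ) (φ : Cplus G) : mu1 v d₀ φ = ∑ x ∈ atomSet φ, wgt1 v d₀ x := rfl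

theorem step1 {A : Cplus (G.bump v) → Cplus G} (hA : IsA G v A) {d₀ : ℕ}
    {φ : Cplus G} {K : G.Ch} {S : Finset V} {d : ℕ}
    (hdeg : ∀ x ∈ atomSet φ, x.2 ≤ d₀)
    (hvS : v ∈ S) (hatom : cf (φ (K, S)) d ≠ 0) :
    ∃ ψ₁ : Cplus (G.bump v),
      mu1 v d₀ (φ + A ψ₁) < mu1 v d₀ φ ∧
      (∀ x ∈ atomSet (φ + A ψ₁), x.2 ≤ d₀) ∧
      (∀ p : G.Ch × Finset V, v ∉ p.2 → (φ + A ψ₁) p = φ p) := by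
  have hd0 : d ≤ d₀ := hdeg ((K, S), d) (mem_atomSet.mpr hatom)
  set C := 2 * d₀ + 12 with hC
  set F := d₀ + 7 with hF
  set Phi0 := (rVal G v K S).natAbs + F * (d + 1) with hPhi0
  set ψ₁ : Cplus (G.bump v) := Finsupp.single (K.bumpSh v (-1), S) (Um d) with hψ₁
  set ξ := A ψ₁ with hξdef
  set J : Finset ((G.Ch × Finset V) × ℕ) :=
    (((Finset.Icc (-(d : ℤ) - 5) ((d : ℤ) + 5)).erase 0).filter
      (fun j => cExp G v (-1 - j) (K.evenSh v j) S ≤ (d : ℤ))).image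
      (fun j => ((K.evenSh v j, S),
        ((d : ℤ) - cExp G v (-1 - j) (K.evenSh v j) S).toNat)) with hJdef
  have hrow : ∀ j : ℤ, ξ (K.evenSh v j, S)
      = Upow (cExp G v (-1 - j) (K.evenSh v j) S) (Um d) := by
    intro j
    rw [hξdef, hψ₁, A_single_eval hA]
  have hrow0 : ξ (K, S) = Um d := by
    have h1 := hrow 0
    rw [evenSh_zero] at h1
    rw [h1, show (-1 : ℤ) - 0 = -1 from by norm_num, cExp_neg_one, Upow_zero_exp]
  have hne : ∀ p : G.Ch × Finset V, ξ p ≠ 0 → p.2 = S ∧ ∃ j : ℤ, p.1 = K.evenSh v j := by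
    intro p hp
    rw [hξdef, hψ₁] at hp
    exact A_single_ne hA K (-1) S (Um d) hp
  have hclass : ∀ x : (G.Ch × Finset V) × ℕ,
      cf (ξ x.1) x.2 ≠ 0 → x = ((K, S), d) ∨ x ∈ J := by
    intro x hx
    obtain ⟨hS', j, hj⟩ := hne x.1 (fun hz => hx (by rw [hz]; exact cf_zero x.2))
    have hx1 : x.1 = (K.evenSh v j, S) := Prod.ext hj hS'
    rw [hx1, hrow j] at hx
    have hxe := cf_Upow_Um_ne hx
    have h0e := cExp_nonneg (G := G) (v := v) (-1 - j) (K.evenSh v j) S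
    have hle : cExp G v (-1 - j) (K.evenSh v j) S ≤ (d : ℤ) := by omega
    by_cases hj0 : j = 0
    · left
      subst hj0
      have hz : cExp G v (-1 - 0) (K.evenSh v 0) S = 0 := by
        rw [evenSh_zero, show (-1 : ℤ) - 0 = -1 from by norm_num, cExp_neg_one]
      rw [hz] at hxe
      rw [evenSh_zero] at hx1
      have hx2 : x.2 = d := by omega
      exact Prod.ext hx1 hx2
    · right
      have hbd := cExp_le_bound (by omega : (0:ℤ) ≤ (d:ℤ)) hle
      rw [hJdef, Finset.mem_image]
      refine ⟨j, ?_, ?_⟩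
      · rw [Finset.mem_filter, Finset.mem_erase, Finset.mem_Icc]
        exact ⟨⟨hj0, by omega⟩, hle⟩
      · refine Prod.ext hx1.symm ?_
        show ((d : ℤ) - cExp G v (-1 - j) (K.evenSh v j) S).toNat = x.2
        omega
  have hcancel : cf ((φ + ξ) (K, S)) d = 0 := by
    rw [Finsupp.add_apply, cf_add, hrow0, cf_Um_self, zmod2_ne_zero hatom]
    decide
  have hwx₀ : wgt1 v d₀ ((K, S), d) = C ^ Phi0 := by
    rw [wgt1_eval, if_pos hvS, ← hF, ← hC, hPhi0]
  have hjw : ∀ x ∈ J, wgt1 v d₀ x ≤ C ^ (Phi0 - 1) := by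
    intro x hx
    rw [hJdef, Finset.mem_image] at hx
    obtain ⟨j, hjmem, rfl⟩ := hx
    rw [Finset.mem_filter, Finset.mem_erase, Finset.mem_Icc] at hjmem
    obtain ⟨⟨hj0, hjlo, hjhi⟩, hjle⟩ := hjmem
    have h0e := cExp_nonneg (G := G) (v := v) (-1 - j) (K.evenSh v j) S
    rw [wgt1_eval, if_pos hvS, ← hF, ← hC]
    refine Nat.pow_le_pow_right (by omega) ?_
    rw [rVal_evenSh]
    by_cases hez : cExp G v (-1 - j) (K.evenSh v j) S = 0
    · rcases cExp_zero_cases hvS hez with h1 | ⟨h1, h2⟩ | ⟨h1, h2⟩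
      · omega
      · -- -1 - j = 0, so j = -1 and rVal (K.evenSh v j) ≥ 0
        rw [rVal_evenSh] at h2
        rw [hez]
        have hT : ((d : ℤ) - 0).toNat = d := by omega
        rw [hT]
        omega
      · rw [rVal_evenSh] at h2
        rw [hez]
        have hT : ((d : ℤ) - 0).toNat = d := by omega
        rw [hT]
        omega
    · have he1 : 1 ≤ cExp G v (-1 - j) (K.evenSh v j) S := by omega
      set t := ((d : ℤ) - cExp G v (-1 - j) (K.evenSh v j) S).toNat with ht
      have ht1 : t + 1 ≤ d := by omega
      have hmul : F * (t + 1) ≤ F * d := Nat.mul_le_mul_left F ht1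
      have hsucc : F * (d + 1) = F * d + F := by ring
      omega
  have hJcard : J.card ≤ 2 * d + 10 := by
    have h1 := Finset.card_image_le (s := (((Finset.Icc (-(d : ℤ) - 5) ((d : ℤ) + 5)).erase 0).filter
      (fun j => cExp G v (-1 - j) (K.evenSh v j) S ≤ (d : ℤ))))
      (f := fun j => (((K.evenSh v j, S),
        ((d : ℤ) - cExp G v (-1 - j) (K.evenSh v j) S).toNat) : (G.Ch × Finset V) × ℕ))
    have h2 := Finset.card_filter_le ((Finset.Icc (-(d : ℤ) - 5) ((d : ℤ) + 5)).erase 0)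
      (fun j => cExp G v (-1 - j) (K.evenSh v j) S ≤ (d : ℤ))
    have h3 := Finset.card_erase_of_mem
      (show (0 : ℤ) ∈ Finset.Icc (-(d : ℤ) - 5) ((d : ℤ) + 5) from by
        rw [Finset.mem_Icc]; omega)
    have h4 : (Finset.Icc (-(d : ℤ) - 5) ((d : ℤ) + 5)).card = 2 * d + 11 := by
      rw [Int.card_Icc]
      omega
    rw [hJdef]
    omega
  have hΦpos : 1 ≤ Phi0 := by
    have hple : 1 * 1 ≤ F * (d + 1) := Nat.mul_le_mul (by omega) (by omega)
    omega
  have hpos' : 0 < C ^ (Phi0 - 1) := Nat.pow_pos (by omega)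
  have hpow : C ^ Phi0 = C ^ (Phi0 - 1) * C := by
    rw [← pow_succ, Nat.sub_add_cancel hΦpos]
  have hJ : ∑ x ∈ J, wgt1 v d₀ x < wgt1 v d₀ ((K, S), d) := by
    have h1 := Finset.sum_le_card_nsmul J (wgt1 v d₀) (C ^ (Phi0 - 1)) hjw
    rw [smul_eq_mul] at h1
    have h2 : J.card * C ^ (Phi0 - 1) ≤ (2 * d + 10) * C ^ (Phi0 - 1) :=
      Nat.mul_le_mul_right _ hJcard
    have h3 : (2 * d + 10) * C ^ (Phi0 - 1) < C * C ^ (Phi0 - 1) :=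
      (Nat.mul_lt_mul_right hpos').mpr (by omega)
    rw [hwx₀, hpow]
    calc ∑ x ∈ J, wgt1 v d₀ x ≤ J.card * C ^ (Phi0 - 1) := h1
      _ ≤ (2 * d + 10) * C ^ (Phi0 - 1) := h2
      _ < C * C ^ (Phi0 - 1) := h3
      _ = C ^ (Phi0 - 1) * C := by ring
  refine ⟨ψ₁, ?_, ?_, ?_⟩
  · exact atom_sum_lt hatom hcancel hclass hJ
  · intro x hx
    rw [mem_atomSet, Finsupp.add_apply, cf_add] at hx
    by_cases hxi : cf (ξ x.1) x.2 = 0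
    · refine hdeg x (mem_atomSet.mpr ?_)
      intro hc
      rw [hc, hxi] at hx
      exact hx (by rw [add_zero])
    · rcases hclass x hxi with he | hm
      · rw [he]
        exact hd0
      · rw [hJdef, Finset.mem_image] at hm
        obtain ⟨j, hjmem, rfl⟩ := hm
        have h0e := cExp_nonneg (G := G) (v := v) (-1 - j) (K.evenSh v j) S
        show ((d : ℤ) - cExp G v (-1 - j) (K.evenSh v j) S).toNat ≤ d₀
        omega
  · intro p hp
    have hz : ξ p = 0 := by
      by_contra hc
      exact hp ((hne p hc).1 ▸ hvS)
    rw [Finsupp.add_apply, hz, add_zero]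

theorem no_vatom_kill {φ : Cplus G} (hnone : ¬ ∃ x ∈ atomSet φ, v ∈ x.1.2)
    {p : G.Ch × Finset V} (hp : v ∈ p.2) : φ p = 0 := by
  by_contra hne
  refine hnone ?_
  obtain ⟨m, hm⟩ : ∃ m, cf (φ p) m ≠ 0 := by
    by_contra hc
    push_neg at hc
    exact hne (Tplus_ext fun m => by rw [hc m, cf_zero])
  exact ⟨(p, m), mem_atomSet.mpr hm, hp⟩

theorem L1 {A : Cplus (G.bump v) → Cplus G} (hA : IsA G v A) (d₀ : ℕ) :
    ∀ n : ℕ, ∀ φ : Cplus G, (∀ x ∈ atomSet φ, x.2 ≤ d₀) → mu1 v d₀ φ ≤ n →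
    ∃ ψ : Cplus (G.bump v), ∀ p : G.Ch × Finset V, v ∈ p.2 → (φ + A ψ) p = 0 := by
  intro n
  induction n with
  | zero =>
    intro φ _ hmu
    have hnone : ¬ ∃ x ∈ atomSet φ, v ∈ x.1.2 := by
      rintro ⟨⟨⟨Kx, Sx⟩, mx⟩, hx, hv2⟩
      have hw : 0 < wgt1 v d₀ ((Kx, Sx), mx) := by
        rw [wgt1_eval, if_pos hv2]
        positivity
      have hs := Finset.single_le_sum (f := wgt1 v d₀) (fun y _ => Nat.zero_le _) hx
      rw [mu1_def] at hmu
      omega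
    refine ⟨0, fun p hp => ?_⟩
    rw [A_zero hA, add_zero]
    exact no_vatom_kill hnone hp
  | succ n ih =>
    intro φ hdeg hmu
    by_cases hex : ∃ x ∈ atomSet φ, v ∈ x.1.2
    · obtain ⟨⟨⟨K, S⟩, d⟩, hxmem, hxv⟩ := hex
      obtain ⟨ψ₁, h1, h2, _⟩ := step1 hA hdeg hxv (mem_atomSet.mp hxmem)
      obtain ⟨ψ', hψ'⟩ := ih (φ + A ψ₁) h2 (by omega)
      refine ⟨ψ₁ + ψ', fun p hp => ?_⟩
      rw [A_add hA, ← add_assoc]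
      exact hψ' p hp
    · refine ⟨0, fun p hp => ?_⟩
      rw [A_zero hA, add_zero]
      exact no_vatom_kill hex hp

end AuxStep1



/-! ### Elimination of atoms over subsets not containing `v` -/

section AuxStep2

attribute [local instance] Classical.propDecidable

variable {G : WGraph V} {v : V}

theorem A_finset_sum {A : Cplus (G.bump v) → Cplus G} (hA : IsA G v A)
    {α : Type*} (s : Finset α) (g : α → Cplus (G.bump v)) :
    A (∑ n ∈ s, g n) = ∑ n ∈ s, A (g n) := by
  induction s using Finset.cons_induction with
  | empty => simpa using A_zero hA
  | cons a s ha ih => rw [Finset.sum_cons, Finset.sum_cons, A_add hA, ih]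

/-- The number of atoms at level `D`. -/
def cntAt (φ : Cplus G) (D : ℕ) : ℕ := ((atomSet φ).filter fun x => x.2 = D).card

theorem cntAt_def (φ : Cplus G) (D : ℕ) :
    cntAt φ D = ((atomSet φ).filter fun x => x.2 = D).card := rfl

theorem step2 {A : Cplus (G.bump v) → Cplus G} (hA : IsA G v A)
    {B : Cplus G → Cplus (G.delete v)} (hB : IsB G v B) {φ : Cplus G} (hBφ : B φ = 0)
    (hvS : ∀ p : G.Ch × Finset V, v ∈ p.2 → φ p = 0)
    {K : G.Ch} {S : Finset V} {D : ℕ}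
    (hatom : cf (φ (K, S)) D ≠ 0) (htop : ∀ x ∈ atomSet φ, x.2 ≤ D) :
    ∃ ψ₁ : Cplus (G.bump v),
      (∀ x ∈ atomSet (φ + A ψ₁), x.2 ≤ D) ∧
      cntAt (φ + A ψ₁) D < cntAt φ D ∧
      (∀ p : G.Ch × Finset V, v ∈ p.2 → (φ + A ψ₁) p = 0) := by
  have hS : v ∉ S := by
    intro h
    rw [hvS (K, S) h] at hatom
    exact hatom (cf_zero D)
  obtain ⟨j', hj'0, hj'⟩ := exists_second_atom hB hBφ hS hatom
  set lo := min 0 j' with hlo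
  set hi := max 0 j' with hhi
  have hlohi : lo < hi := by rw [hlo, hhi]; omega
  set ψ₁ : Cplus (G.bump v) :=
    ∑ n ∈ Finset.Ico lo hi, Finsupp.single (K.bumpSh v n, S) (Um D) with hψ₁
  set ξ := A ψ₁ with hξdef
  have hξsum : ξ = ∑ n ∈ Finset.Ico lo hi,
      A (Finsupp.single (K.bumpSh v n, S) (Um D)) := by
    rw [hξdef, hψ₁, A_finset_sum hA]
  have hrow : ∀ k : ℤ, ξ (K.evenSh v k, S)
      = ∑ n ∈ Finset.Ico lo hi, Upow (Tt (n - k)) (Um D) := by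
    intro k
    rw [hξsum, Finsupp.finset_sum_apply]
    refine Finset.sum_congr rfl fun n _ => ?_
    rw [A_single_eval hA, cExp_of_not_mem _ _ hS]
  have hne : ∀ p : G.Ch × Finset V, ξ p ≠ 0 → p.2 = S ∧ ∃ k : ℤ, p.1 = K.evenSh v k := by
    intro p hp
    rw [hξsum] at hp
    have h2 : ∃ n ∈ Finset.Ico lo hi,
        A (Finsupp.single (K.bumpSh v n, S) (Um D)) p ≠ 0 := by
      by_contra hc
      push_neg at hc
      refine hp ?_
      rw [Finsupp.finset_sum_apply]
      exact Finset.sum_eq_zero hc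
    obtain ⟨n, _, hn⟩ := h2
    exact A_single_ne hA K n S (Um D) hn
  have hcfD : ∀ k : ℤ, cf (ξ (K.evenSh v k, S)) D
      = (if k ∈ Finset.Ico lo hi then (1 : ZMod 2) else 0)
        + (if k - 1 ∈ Finset.Ico lo hi then (1 : ZMod 2) else 0) := by
    intro k
    rw [hrow k, cf_finset_sum]
    have hterm : ∀ n : ℤ, cf (Upow (Tt (n - k)) (Um D)) D
        = (if n = k then (1 : ZMod 2) else 0) + (if n = k - 1 then (1 : ZMod 2) else 0) := by
      intro n
      rw [cf_Upow]
      have h0 := Tt_nonneg (n - k)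
      rw [if_pos (by omega), cf_Um]
      by_cases h1 : Tt (n - k) = 0
      · rcases (Tt_eq_zero_iff (n - k)).mp h1 with h2 | h2
        · rw [if_pos (by omega), if_pos (by omega), if_neg (by omega), add_zero]
        · rw [if_pos (by omega), if_neg (by omega), if_pos (by omega), zero_add]
      · have h3 : ¬(n - k = 0 ∨ n - k = -1) := fun hh => h1 ((Tt_eq_zero_iff _).mpr hh)
        rw [if_neg (by omega), if_neg (by omega), if_neg (by omega), add_zero]
    rw [Finset.sum_congr rfl (fun n _ => hterm n), Finset.sum_add_distrib,
      Finset.sum_ite_eq' _ k (fun _ => (1 : ZMod 2)),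
      Finset.sum_ite_eq' _ (k - 1) (fun _ => (1 : ZMod 2))]
  have hdegξ : ∀ x : (G.Ch × Finset V) × ℕ, cf (ξ x.1) x.2 ≠ 0 → x.2 ≤ D := by
    intro x hx
    obtain ⟨hS', k, hk⟩ := hne x.1 (fun hz => hx (by rw [hz]; exact cf_zero x.2))
    have hx1 : x.1 = (K.evenSh v k, S) := Prod.ext hk hS'
    rw [hx1, hrow k, cf_finset_sum] at hx
    obtain ⟨n, _, hn⟩ := Finset.exists_ne_zero_of_sum_ne_zero hx
    have h4 := cf_Upow_Um_ne hn
    have h5 := Tt_nonneg (n - k)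
    omega
  have hφhi : cf (φ (K.evenSh v hi, S)) D ≠ 0 := by
    by_cases hpos : 0 < j'
    · have h1 : hi = j' := by rw [hhi]; omega
      rw [h1]
      exact hj'
    · have h1 : hi = 0 := by rw [hhi]; omega
      rw [h1, evenSh_zero]
      exact hatom
  have hφlo : cf (φ (K.evenSh v lo, S)) D ≠ 0 := by
    by_cases hpos : 0 < j'
    · have h1 : lo = 0 := by rw [hlo]; omega
      rw [h1, evenSh_zero]
      exact hatom
    · have h1 : lo = j' := by rw [hlo]; omega
      rw [h1]
      exact hj'
  have hcf_hi : cf (ξ (K.evenSh v hi, S)) D = 1 := by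
    rw [hcfD, if_neg (by rw [Finset.mem_Ico]; omega),
      if_pos (by rw [Finset.mem_Ico]; omega), zero_add]
  have hcf_lo : cf (ξ (K.evenSh v lo, S)) D = 1 := by
    rw [hcfD, if_pos (by rw [Finset.mem_Ico]; omega),
      if_neg (by rw [Finset.mem_Ico]; omega), add_zero]
  have hcf_other : ∀ k : ℤ, k ≠ lo → k ≠ hi → cf (ξ (K.evenSh v k, S)) D = 0 := by
    intro k hk1 hk2
    rw [hcfD]
    by_cases h1 : k ∈ Finset.Ico lo hi <;> by_cases h2 : k - 1 ∈ Finset.Ico lo hi <;>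
      simp only [Finset.mem_Ico] at h1 h2
    · rw [if_pos (by rw [Finset.mem_Ico]; omega), if_pos (by rw [Finset.mem_Ico]; omega)]
      decide
    · omega
    · omega
    · rw [if_neg (by rw [Finset.mem_Ico]; omega), if_neg (by rw [Finset.mem_Ico]; omega)]
      decide
  refine ⟨ψ₁, ?_, ?_, ?_⟩
  · intro x hx
    rw [mem_atomSet, Finsupp.add_apply, cf_add] at hx
    by_cases hxi : cf (ξ x.1) x.2 = 0
    · refine htop x (mem_atomSet.mpr ?_)
      intro hc
      rw [hc, hxi] at hx
      exact hx (by rw [add_zero])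
    · exact hdegξ x hxi
  · have hsub : (atomSet (φ + ξ)).filter (fun x => x.2 = D)
        ⊆ ((atomSet φ).filter (fun x => x.2 = D)).erase ((K.evenSh v hi, S), D) := by
      intro y hy
      rw [Finset.mem_filter, mem_atomSet, Finsupp.add_apply, cf_add] at hy
      obtain ⟨hy1, hy2⟩ := hy
      rw [Finset.mem_erase, Finset.mem_filter, mem_atomSet]
      by_cases hz : cf (ξ y.1) y.2 = 0
      · refine ⟨?_, ?_, hy2⟩
        · intro he
          rw [he] at hz
          have hz' : cf (ξ (K.evenSh v hi, S)) D = 0 := hz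
          rw [hcf_hi] at hz'
          exact (by decide : (1 : ZMod 2) ≠ 0) hz'
        · rw [hz, add_zero] at hy1
          exact hy1
      · exfalso
        obtain ⟨hS', k, hk⟩ := hne y.1 (fun hzz => hz (by rw [hzz]; exact cf_zero y.2))
        have hy1' : y.1 = (K.evenSh v k, S) := Prod.ext hk hS'
        rw [hy1', hy2] at hz hy1
        have hk' : k = lo ∨ k = hi := by
          by_contra hc
          push_neg at hc
          exact hz (hcf_other k hc.1 hc.2)
        rcases hk' with rfl | rfl
        · rw [hcf_lo, zmod2_ne_zero hφlo] at hy1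
          exact hy1 (by decide)
        · rw [hcf_hi, zmod2_ne_zero hφhi] at hy1
          exact hy1 (by decide)
    have hximem : ((K.evenSh v hi, S), D) ∈ (atomSet φ).filter (fun x => x.2 = D) :=
      Finset.mem_filter.mpr ⟨mem_atomSet.mpr hφhi, rfl⟩
    have h1 := Finset.card_le_card hsub
    have h2 := Finset.card_erase_of_mem hximem
    have h3 := Finset.card_pos.mpr ⟨_, hximem⟩
    change cntAt (φ + ξ) D < cntAt φ D
    rw [cntAt_def, cntAt_def]
    omega
  · intro p hp
    have hz : ξ p = 0 := by
      by_contra hc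
      exact hS ((hne p hc).1 ▸ hp)
    rw [Finsupp.add_apply, hz, add_zero]
    exact hvS p hp

theorem L2 {A : Cplus (G.bump v) → Cplus G} (hA : IsA G v A)
    {B : Cplus G → Cplus (G.delete v)} (hB : IsB G v B) :
    ∀ D : ℕ, ∀ c : ℕ, ∀ φ : Cplus G, B φ = 0 →
      (∀ p : G.Ch × Finset V, v ∈ p.2 → φ p = 0) →
      (∀ x ∈ atomSet φ, x.2 ≤ D) → cntAt φ D ≤ c →
      ∃ ψ : Cplus (G.bump v), φ = A ψ := by
  intro D
  induction D using Nat.strong_induction_on with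
  | _ D ihD =>
    intro c
    induction c with
    | zero =>
      intro φ hB0 hvS hdeg hcnt
      by_cases hD : D = 0
      · subst hD
        have hempty : ∀ x, x ∉ atomSet φ := by
          intro x hx
          have h1 : x.2 = 0 := Nat.le_zero.mp (hdeg x hx)
          have h2 : x ∈ (atomSet φ).filter (fun y => y.2 = 0) :=
            Finset.mem_filter.mpr ⟨hx, h1⟩
          have h3 := Finset.card_pos.mpr ⟨x, h2⟩
          rw [cntAt_def] at hcnt
          omega
        exact ⟨0, by rw [A_zero hA]; exact eq_zero_of_atomSet_empty hempty⟩
      · have hdeg' : ∀ x ∈ atomSet φ, x.2 ≤ D - 1 := by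
          intro x hx
          have h1 := hdeg x hx
          rcases Nat.lt_or_ge x.2 D with h2 | h2
          · omega
          · exfalso
            have h3 : x ∈ (atomSet φ).filter (fun y => y.2 = D) :=
              Finset.mem_filter.mpr ⟨hx, by omega⟩
            have h4 := Finset.card_pos.mpr ⟨x, h3⟩
            rw [cntAt_def] at hcnt
            omega
        exact ihD (D - 1) (by omega) (cntAt φ (D - 1)) φ hB0 hvS hdeg' le_rfl
    | succ c ihc =>
      intro φ hB0 hvS hdeg hcnt
      by_cases hex : ∃ x ∈ atomSet φ, x.2 = D
      · obtain ⟨⟨⟨K, S⟩, d⟩, hx, hxD⟩ := hex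
        have hxD' : d = D := hxD
        subst hxD'
        have hatom : cf (φ (K, S)) d ≠ 0 := mem_atomSet.mp hx
        obtain ⟨ψ₁, ha, hb, hc2⟩ := step2 hA hB hB0 hvS hatom hdeg
        have hB0' : B (φ + A ψ₁) = 0 := by
          rw [B_add hB, hB0, B_A_eq_zero hA hB, add_zero]
        obtain ⟨ψ', hψ'⟩ := ihc (φ + A ψ₁) hB0' hc2 ha (by omega)
        refine ⟨ψ' + ψ₁, ?_⟩
        rw [A_add hA, ← hψ', add_assoc, Cplus_add_self, add_zero]
      · have hcnt0 : cntAt φ D = 0 := by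
          rw [cntAt_def, Finset.card_eq_zero, Finset.filter_eq_empty_iff]
          intro x hx
          exact fun hD2 => hex ⟨x, hx, hD2⟩
        exact ihc φ hB0 hvS hdeg (by omega)

end AuxStep2


/-- Exactness at the middle term: the image of the map
`A : C⁺(G₊₁(v)) → C⁺(G)` equals the kernel of the map `B : C⁺(G) → C⁺(G−v)`. -/
theorem range_A_eq_ker_B (G : WGraph V) (v : V)
    (A : Cplus (G.bump v) → Cplus G) (hA : IsA G v A)
    (B : Cplus G → Cplus (G.delete v)) (hB : IsB G v B) :
    Set.range A = {φ : Cplus G | B φ = 0} := by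
  classical
  ext φ
  simp only [Set.mem_range, Set.mem_setOf_eq]
  constructor
  · rintro ⟨ψ, rfl⟩
    exact B_A_eq_zero hA hB ψ
  · intro hφ
    obtain ⟨ψ₁, hψ₁⟩ := L1 hA ((atomSet φ).sup fun x => x.2)
      (mu1 v ((atomSet φ).sup fun x => x.2) φ) φ
      (fun x hx => Finset.le_sup (f := fun y : (G.Ch × Finset V) × ℕ => y.2) hx) le_rfl
    have hB' : B (φ + A ψ₁) = 0 := by
      rw [B_add hB, hφ, B_A_eq_zero hA hB, add_zero]
    obtain ⟨ψ₂, hψ₂⟩ := L2 hA hB ((atomSet (φ + A ψ₁)).sup fun x => x.2)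
      (cntAt (φ + A ψ₁) ((atomSet (φ + A ψ₁)).sup fun x => x.2)) (φ + A ψ₁) hB' hψ₁
      (fun x hx => Finset.le_sup (f := fun y : (G.Ch × Finset V) × ℕ => y.2) hx) le_rfl
    refine ⟨ψ₂ + ψ₁, ?_⟩
    rw [A_add hA, ← hψ₂, add_assoc, Cplus_add_self, add_zero]

end
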